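/- arXiv:2311.12374 — 5 statements merged into one kernel-verified Lean document; each statement's English description precedes it below -/
import Mathlib

section
/- Let f : ℝ² → ℝ be a twice continuously differentiable function which vanishes at infinity and whose functions f, ∂ₓf, ∂_yf, ∂ₓ∂_yf all belong to L²(ℝ²). Then for every (x,y) ∈ ℝ², f(x,y)² ≤ 2(‖∂ₓf‖_{L²} ‖∂_yf‖_{L²} + ‖f‖_{L²} ‖∂ₓ∂_yf‖_{L²}); in particular ‖f‖²_{L^∞(ℝ²)} ≤ 2(‖∂ₓf‖_{L²} ‖∂_yf‖_{L²} + ‖f‖_{L²} ‖∂ₓ∂_yf‖_{L²}). -/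
open MeasureTheory Filter

lemma oneD_aux (g g' : ℝ → ℝ) (hd : ∀ t, HasDerivAt g (g' t) t) (hc : Continuous g')
    (x s : ℝ) : (‖g x‖₊ : ENNReal) ≤ ‖g s‖₊ + ∫⁻ t, ‖g' t‖₊ := by
  have hdg : deriv g = g' := funext fun t => (hd t).deriv
  have key : ∫ t in s..x, g' t = g x - g s := by
    rw [← hdg]
    exact intervalIntegral.integral_deriv_eq_sub (fun t _ => (hd t).differentiableAt)
      (hdg ▸ hc.intervalIntegrable s x)
  have h2 : (‖g x - g s‖₊ : ENNReal) ≤ ∫⁻ t, ‖g' t‖₊ := by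
    rw [← key, intervalIntegral.intervalIntegral_eq_integral_uIoc]
    calc (‖(if s ≤ x then (1:ℝ) else -1) • ∫ t in Set.uIoc s x, g' t‖₊ : ENNReal)
        = ‖∫ t in Set.uIoc s x, g' t‖₊ := by split_ifs <;> simp
      _ ≤ ∫⁻ t in Set.uIoc s x, ‖g' t‖₊ := enorm_integral_le_lintegral_enorm _
      _ ≤ ∫⁻ t, ‖g' t‖₊ := setLIntegral_le_lintegral _ _
  calc (‖g x‖₊ : ENNReal) ≤ ‖g s‖₊ + ‖g x - g s‖₊ := by
        exact_mod_cast norm_le_norm_add_norm_sub' (g x) (g s)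
    _ ≤ ‖g s‖₊ + ∫⁻ t, ‖g' t‖₊ := add_le_add_right h2 _

lemma oneD_van (g g' : ℝ → ℝ) (hd : ∀ t, HasDerivAt g (g' t) t) (hc : Continuous g')
    (hvan : Tendsto g (cocompact ℝ) (nhds 0)) (x : ℝ) :
    (‖g x‖₊ : ENNReal) ^ 2 ≤ 2 * ∫⁻ t, (‖g t‖₊ : ENNReal) * ‖g' t‖₊ := by
  have hg : Continuous g := by
    rw [continuous_iff_continuousAt]; exact fun t => (hd t).continuousAt
  set I : ENNReal := ∫⁻ t, (‖g t‖₊ : ENNReal) * ‖g' t‖₊ with hI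
  have step : ∀ s : ℝ, (‖g x‖₊ : ENNReal) ^ 2 ≤ (‖g s‖₊ : ENNReal) ^ 2 + 2 * I := by
    intro s
    have hd2 : ∀ t, HasDerivAt (fun t => g t * g t) (g' t * g t + g t * g' t) t :=
      fun t => (hd t).mul (hd t)
    have hc2 : Continuous (fun t => g' t * g t + g t * g' t) := (hc.mul hg).add (hg.mul hc)
    have h := oneD_aux (fun t => g t * g t) _ hd2 hc2 x s
    have hsq : ∀ u : ℝ, (‖g u * g u‖₊ : ENNReal) = (‖g u‖₊ : ENNReal) ^ 2 := by
      intro u; rw [nnnorm_mul]; push_cast; ring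
    simp only [hsq] at h
    refine h.trans (add_le_add_right ?_ _)
    rw [two_mul, hI, ← lintegral_add_left (show Measurable fun t => (‖g t‖₊ : ENNReal) * ‖g' t‖₊ from
      hg.measurable.enorm.mul hc.measurable.enorm)]
    refine lintegral_mono fun t => ?_
    calc (‖g' t * g t + g t * g' t‖₊ : ENNReal) ≤ ↑‖g' t * g t‖₊ + ↑‖g t * g' t‖₊ := by
          exact_mod_cast nnnorm_add_le _ _
      _ ≤ (‖g t‖₊ : ENNReal) * ‖g' t‖₊ + (‖g t‖₊ : ENNReal) * ‖g' t‖₊ := by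
          rw [nnnorm_mul, nnnorm_mul]; push_cast; rw [mul_comm]
  refine ENNReal.le_of_forall_pos_le_add fun ε hε _ => ?_
  have hsmall : ∀ᶠ s in cocompact ℝ, (‖g s‖₊ : ENNReal) ^ 2 ≤ ε := by
    have h3 : ∀ᶠ s in cocompact ℝ, ‖g s‖₊ < NNReal.sqrt ε :=
      hvan.nnnorm.eventually_lt_const (by simpa using NNReal.sqrt_pos.2 hε)
    filter_upwards [h3] with s hs
    have : ‖g s‖₊ ^ 2 ≤ ε := by
      calc ‖g s‖₊ ^ 2 ≤ NNReal.sqrt ε ^ 2 := pow_le_pow_left₀ zero_le hs.le 2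
        _ = ε := NNReal.sq_sqrt _
    exact_mod_cast this
  obtain ⟨s, hs⟩ := hsmall.exists
  calc (‖g x‖₊ : ENNReal) ^ 2 ≤ (‖g s‖₊ : ENNReal) ^ 2 + 2 * I := step s
    _ ≤ ε + 2 * I := add_le_add_left hs _
    _ = 2 * I + ε := add_comm _ _

lemma holder2 {α : Type*} [MeasurableSpace α] (μ : Measure α) (a b : α → ℝ)
    (ha : AEMeasurable a μ) (hb : AEMeasurable b μ) :
    ∫⁻ z, (‖a z‖₊ : ENNReal) * ‖b z‖₊ ∂μ ≤ eLpNorm a 2 μ * eLpNorm b 2 μ := by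
  have hconj : Real.HolderConjugate 2 2 := Real.holderConjugate_iff.mpr ⟨one_lt_two, by norm_num⟩
  have h := ENNReal.lintegral_mul_le_Lp_mul_Lq μ hconj ha.enorm hb.enorm
  rw [eLpNorm_eq_lintegral_rpow_enorm_toReal (by norm_num) (by norm_num) (f := a),
      eLpNorm_eq_lintegral_rpow_enorm_toReal (by norm_num) (by norm_num) (f := b)]
  simpa [enorm_eq_nnnorm] using h

/-- a Gagliardo–Nirenberg-type `L^∞` inequality in 2D:
`‖f‖_∞² ≤ 2(‖fₓ‖₂‖f_y‖₂ + ‖f‖₂‖f_{xy}‖₂)`. -/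
theorem Linfty_interpolation_2d (f fx fy fxy : ℝ × ℝ → ℝ)
    (hf : ContDiff ℝ 2 f)
    (hvan : Filter.Tendsto f (Filter.cocompact (ℝ × ℝ)) (nhds 0))
    (hfx : ∀ p : ℝ × ℝ, fx p = fderiv ℝ f p (1, 0))
    (hfy : ∀ p : ℝ × ℝ, fy p = fderiv ℝ f p (0, 1))
    (hfxy : ∀ p : ℝ × ℝ, fxy p = fderiv ℝ (fun q => fderiv ℝ f q (0, 1)) p (1, 0))
    (h1 : MemLp f 2 (volume : Measure (ℝ × ℝ)))
    (h2 : MemLp fx 2 (volume : Measure (ℝ × ℝ)))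
    (h3 : MemLp fy 2 (volume : Measure (ℝ × ℝ)))
    (h4 : MemLp fxy 2 (volume : Measure (ℝ × ℝ))) :
    (∀ p : ℝ × ℝ, (f p) ^ 2 ≤
      2 * ((eLpNorm fx 2 (volume : Measure (ℝ × ℝ))).toReal *
              (eLpNorm fy 2 (volume : Measure (ℝ × ℝ))).toReal +
            (eLpNorm f 2 (volume : Measure (ℝ × ℝ))).toReal *
              (eLpNorm fxy 2 (volume : Measure (ℝ × ℝ))).toReal)) ∧
    (eLpNorm f ⊤ (volume : Measure (ℝ × ℝ))) ^ 2 ≤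
      ENNReal.ofReal
        (2 * ((eLpNorm fx 2 (volume : Measure (ℝ × ℝ))).toReal *
                (eLpNorm fy 2 (volume : Measure (ℝ × ℝ))).toReal +
              (eLpNorm f 2 (volume : Measure (ℝ × ℝ))).toReal *
                (eLpNorm fxy 2 (volume : Measure (ℝ × ℝ))).toReal)) := by
  -- basic regularity
  have hcf : Continuous f := hf.continuous
  have hfyF : fy = fun p => fderiv ℝ f p (0, 1) := funext hfy
  have hfxF : fx = fun p => fderiv ℝ f p (1, 0) := funext hfx
  have hF1 : ContDiff ℝ 1 fy := by
    rw [hfyF]; exact (hf.fderiv_right (by norm_num)).clm_apply contDiff_const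
  have hcfy : Continuous fy := hF1.continuous
  have hcfx : Continuous fx := by
    rw [hfxF]; exact (hf.continuous_fderiv two_ne_zero).clm_apply continuous_const
  have hcfxy : Continuous fxy := by
    rw [funext hfxy, ← hfyF]
    exact (hF1.continuous_fderiv one_ne_zero).clm_apply continuous_const
  have hfd : Differentiable ℝ f := hf.differentiable two_ne_zero
  -- slice derivatives
  have hDy : ∀ (x t : ℝ), HasDerivAt (fun t' => f (x, t')) (fy (x, t)) t := by
    intro x t
    have hc : HasDerivAt (fun t' : ℝ => ((x, t') : ℝ × ℝ)) ((0 : ℝ), (1 : ℝ)) t :=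
      (hasDerivAt_const t x).prodMk (hasDerivAt_id t)
    rw [hfy]
    simpa [Function.comp_def] using ((hfd (x, t)).hasFDerivAt.comp_hasDerivAt t hc)
  have hDx : ∀ (t s : ℝ), HasDerivAt (fun s' => f (s', t)) (fx (s, t)) s := by
    intro t s
    have hc : HasDerivAt (fun s' : ℝ => ((s', t) : ℝ × ℝ)) ((1 : ℝ), (0 : ℝ)) s :=
      (hasDerivAt_id s).prodMk (hasDerivAt_const s t)
    rw [hfx]
    simpa [Function.comp_def] using ((hfd (s, t)).hasFDerivAt.comp_hasDerivAt s hc)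
  have hDxy : ∀ (t s : ℝ), HasDerivAt (fun s' => fy (s', t)) (fxy (s, t)) s := by
    intro t s
    have hc : HasDerivAt (fun s' : ℝ => ((s', t) : ℝ × ℝ)) ((1 : ℝ), (0 : ℝ)) s :=
      (hasDerivAt_id s).prodMk (hasDerivAt_const s t)
    have hFd : Differentiable ℝ fy := hF1.differentiable one_ne_zero
    have := (hFd (s, t)).hasFDerivAt.comp_hasDerivAt s hc
    rw [hfxy]
    simp only [hfyF]
    simpa [Function.comp_def, hfyF] using this
  -- measurability
  have mf : Measurable fun p : ℝ × ℝ => (‖f p‖₊ : ENNReal) := hcf.measurable.enorm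
  have mfx : Measurable fun p : ℝ × ℝ => (‖fx p‖₊ : ENNReal) := hcfx.measurable.enorm
  have mfy : Measurable fun p : ℝ × ℝ => (‖fy p‖₊ : ENNReal) := hcfy.measurable.enorm
  have mfxy : Measurable fun p : ℝ × ℝ => (‖fxy p‖₊ : ENNReal) := hcfxy.measurable.enorm
  -- finite L² norms
  have hfin1 : eLpNorm f 2 (volume : Measure (ℝ × ℝ)) ≠ ⊤ := h1.eLpNorm_ne_top
  have hfin2 : eLpNorm fx 2 (volume : Measure (ℝ × ℝ)) ≠ ⊤ := h2.eLpNorm_ne_top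
  have hfin3 : eLpNorm fy 2 (volume : Measure (ℝ × ℝ)) ≠ ⊤ := h3.eLpNorm_ne_top
  have hfin4 : eLpNorm fxy 2 (volume : Measure (ℝ × ℝ)) ≠ ⊤ := h4.eLpNorm_ne_top
  set S : ENNReal := eLpNorm fx 2 (volume : Measure (ℝ × ℝ)) * eLpNorm fy 2 (volume : Measure (ℝ × ℝ))
    + eLpNorm f 2 (volume : Measure (ℝ × ℝ)) * eLpNorm fxy 2 (volume : Measure (ℝ × ℝ)) with hS
  have hSfin : S ≠ ⊤ := by
    rw [hS]
    exact ENNReal.add_ne_top.2 ⟨ENNReal.mul_ne_top hfin2 hfin3, ENNReal.mul_ne_top hfin1 hfin4⟩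
  -- the inner double integral bound
  have claim3 : (∫⁻ t : ℝ, ∫⁻ u : ℝ, ((‖fx (u, t)‖₊ : ENNReal) * ‖fy (u, t)‖₊
      + (‖f (u, t)‖₊ : ENNReal) * ‖fxy (u, t)‖₊)) ≤ S := by
    have hmeas : AEMeasurable (fun p : ℝ × ℝ => (‖fx p‖₊ : ENNReal) * ‖fy p‖₊
        + (‖f p‖₊ : ENNReal) * ‖fxy p‖₊) ((volume : Measure ℝ).prod volume) := by
      rw [← Measure.volume_eq_prod]
      exact ((mfx.mul mfy).add (mf.mul mfxy)).aemeasurable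
    have heq := lintegral_prod_symm _ hmeas
    rw [← Measure.volume_eq_prod] at heq
    rw [← heq]
    have hsplit : (∫⁻ p : ℝ × ℝ, ((‖fx p‖₊ : ENNReal) * ‖fy p‖₊
        + (‖f p‖₊ : ENNReal) * ‖fxy p‖₊))
        = (∫⁻ p : ℝ × ℝ, (‖fx p‖₊ : ENNReal) * ‖fy p‖₊)
          + ∫⁻ p : ℝ × ℝ, (‖f p‖₊ : ENNReal) * ‖fxy p‖₊ :=
      lintegral_add_left (mfx.mul mfy) _
    rw [hsplit, hS]
    exact add_le_add
      (holder2 _ _ _ hcfx.measurable.aemeasurable hcfy.measurable.aemeasurable)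
      (holder2 _ _ _ hcf.measurable.aemeasurable hcfxy.measurable.aemeasurable)
  -- key pointwise bound in ENNReal
  have key : ∀ p : ℝ × ℝ, (‖f p‖₊ : ENNReal) ^ 2 ≤ 2 * S := by
    rintro ⟨x, y⟩
    -- step 1 : vertical line
    have hvanline : Tendsto (fun t : ℝ => f (x, t)) (cocompact ℝ) (nhds 0) := by
      have hiso : Isometry (fun t : ℝ => ((x, t) : ℝ × ℝ)) :=
        Isometry.of_dist_eq fun a b => by simp [Prod.dist_eq, dist_nonneg]
      simpa [Function.comp_def] using hvan.comp hiso.isClosedEmbedding.tendsto_cocompact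
    have h1' := oneD_van (fun t => f (x, t)) (fun t => fy (x, t)) (hDy x)
      (hcfy.comp (continuous_const.prodMk continuous_id)) hvanline y
    -- step 2 : horizontal transport of f * fy
    have claim2 : ∀ s : ℝ, (∫⁻ t : ℝ, (‖f (x, t)‖₊ : ENNReal) * ‖fy (x, t)‖₊)
        ≤ (∫⁻ t : ℝ, (‖f (s, t)‖₊ : ENNReal) * ‖fy (s, t)‖₊)
          + ∫⁻ t : ℝ, ∫⁻ u : ℝ, ((‖fx (u, t)‖₊ : ENNReal) * ‖fy (u, t)‖₊
            + (‖f (u, t)‖₊ : ENNReal) * ‖fxy (u, t)‖₊) := by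
      intro s
      have hpt : ∀ t : ℝ, (‖f (x, t)‖₊ : ENNReal) * ‖fy (x, t)‖₊
          ≤ (‖f (s, t)‖₊ : ENNReal) * ‖fy (s, t)‖₊
            + ∫⁻ u : ℝ, ((‖fx (u, t)‖₊ : ENNReal) * ‖fy (u, t)‖₊
              + (‖f (u, t)‖₊ : ENNReal) * ‖fxy (u, t)‖₊) := by
        intro t
        have hdw : ∀ u : ℝ, HasDerivAt (fun s' => f (s', t) * fy (s', t))
            (fx (u, t) * fy (u, t) + f (u, t) * fxy (u, t)) u :=
          fun u => (hDx t u).mul (hDxy t u)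
        have hline : Continuous (fun s' : ℝ => ((s', t) : ℝ × ℝ)) :=
          continuous_id.prodMk continuous_const
        have hcw : Continuous (fun u : ℝ => fx (u, t) * fy (u, t) + f (u, t) * fxy (u, t)) :=
          (((hcfx.comp hline).mul (hcfy.comp hline)).add ((hcf.comp hline).mul (hcfxy.comp hline)))
        have h := oneD_aux (fun s' => f (s', t) * fy (s', t)) _ hdw hcw x s
        simp only [nnnorm_mul, ENNReal.coe_mul] at h
        refine h.trans (add_le_add_right (lintegral_mono fun u => ?_) _)
        calc (‖fx (u, t) * fy (u, t) + f (u, t) * fxy (u, t)‖₊ : ENNReal)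
            ≤ ↑‖fx (u, t) * fy (u, t)‖₊ + ↑‖f (u, t) * fxy (u, t)‖₊ := by
              exact_mod_cast nnnorm_add_le _ _
          _ = (‖fx (u, t)‖₊ : ENNReal) * ‖fy (u, t)‖₊
              + (‖f (u, t)‖₊ : ENNReal) * ‖fxy (u, t)‖₊ := by
              rw [nnnorm_mul, nnnorm_mul]; push_cast; ring
      calc (∫⁻ t : ℝ, (‖f (x, t)‖₊ : ENNReal) * ‖fy (x, t)‖₊)
          ≤ ∫⁻ t : ℝ, ((‖f (s, t)‖₊ : ENNReal) * ‖fy (s, t)‖₊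
            + ∫⁻ u : ℝ, ((‖fx (u, t)‖₊ : ENNReal) * ‖fy (u, t)‖₊
              + (‖f (u, t)‖₊ : ENNReal) * ‖fxy (u, t)‖₊)) := lintegral_mono hpt
        _ = _ := by
            have hline : Continuous (fun t : ℝ => ((s, t) : ℝ × ℝ)) :=
              continuous_const.prodMk continuous_id
            exact lintegral_add_left
              (((hcf.comp hline).measurable.enorm).mul ((hcfy.comp hline).measurable.enorm)) _
    -- step 3 : choose a good s
    refine ENNReal.le_of_forall_pos_le_add fun ε hε _ => ?_
    -- the function G
    set A : ℝ → ENNReal := fun s => ∫⁻ t : ℝ, (‖f (s, t)‖₊ : ENNReal) ^ (2 : ℝ) with hA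
    set B : ℝ → ENNReal := fun s => ∫⁻ t : ℝ, (‖fy (s, t)‖₊ : ENNReal) ^ (2 : ℝ) with hB
    have mA : Measurable A :=
      Measurable.lintegral_prod_right (f := fun s t => (‖f (s, t)‖₊ : ENNReal) ^ (2 : ℝ))
        (mf.pow_const _)
    have mB : Measurable B :=
      Measurable.lintegral_prod_right (f := fun s t => (‖fy (s, t)‖₊ : ENNReal) ^ (2 : ℝ))
        (mfy.pow_const _)
    set G : ℝ → ENNReal := fun s => A s ^ (1/2 : ℝ) * B s ^ (1/2 : ℝ) with hG
    have hconj : Real.HolderConjugate 2 2 := Real.holderConjugate_iff.mpr ⟨one_lt_two, by norm_num⟩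
    -- per-line Hölder
    have hTG : ∀ s : ℝ, (∫⁻ t : ℝ, (‖f (s, t)‖₊ : ENNReal) * ‖fy (s, t)‖₊) ≤ G s := by
      intro s
      have hline1 : Measurable fun t : ℝ => (‖f (s, t)‖₊ : ENNReal) :=
        (hcf.comp (continuous_const.prodMk continuous_id)).measurable.enorm
      have hline2 : Measurable fun t : ℝ => (‖fy (s, t)‖₊ : ENNReal) :=
        (hcfy.comp (continuous_const.prodMk continuous_id)).measurable.enorm
      simpa [hG, hA, hB] using ENNReal.lintegral_mul_le_Lp_mul_Lq (volume : Measure ℝ) hconj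
        hline1.aemeasurable hline2.aemeasurable
    -- ∫ G is finite
    have hGfin : (∫⁻ s : ℝ, G s) ≠ ⊤ := by
      have hHolder := ENNReal.lintegral_mul_le_Lp_mul_Lq (volume : Measure ℝ) hconj
        ((mA.pow_const (1/2 : ℝ)).aemeasurable) ((mB.pow_const (1/2 : ℝ)).aemeasurable)
      have hsq : ∀ x : ENNReal, (x ^ (1/2 : ℝ)) ^ (2 : ℝ) = x := by
        intro x
        rw [← ENNReal.rpow_mul]
        norm_num
      simp only [Pi.mul_apply, hsq] at hHolder
      have hAint : (∫⁻ s : ℝ, A s) = ∫⁻ p : ℝ × ℝ, (‖f p‖₊ : ENNReal) ^ (2 : ℝ) := by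
        rw [Measure.volume_eq_prod, lintegral_prod _ (by
          rw [← Measure.volume_eq_prod]; exact (mf.pow_const _).aemeasurable)]
      have hBint : (∫⁻ s : ℝ, B s) = ∫⁻ p : ℝ × ℝ, (‖fy p‖₊ : ENNReal) ^ (2 : ℝ) := by
        rw [Measure.volume_eq_prod, lintegral_prod _ (by
          rw [← Measure.volume_eq_prod]; exact (mfy.pow_const _).aemeasurable)]
      have hfnorm : (∫⁻ p : ℝ × ℝ, (‖f p‖₊ : ENNReal) ^ (2 : ℝ)) ^ (1/2 : ℝ)
          = eLpNorm f 2 (volume : Measure (ℝ × ℝ)) := by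
        rw [eLpNorm_eq_lintegral_rpow_enorm_toReal (by norm_num) (by norm_num)]
        norm_num [enorm_eq_nnnorm]
      have hfynorm : (∫⁻ p : ℝ × ℝ, (‖fy p‖₊ : ENNReal) ^ (2 : ℝ)) ^ (1/2 : ℝ)
          = eLpNorm fy 2 (volume : Measure (ℝ × ℝ)) := by
        rw [eLpNorm_eq_lintegral_rpow_enorm_toReal (by norm_num) (by norm_num)]
        norm_num [enorm_eq_nnnorm]
      have : (∫⁻ s : ℝ, G s) ≤ eLpNorm f 2 (volume : Measure (ℝ × ℝ))
          * eLpNorm fy 2 (volume : Measure (ℝ × ℝ)) := by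
        calc (∫⁻ s : ℝ, G s) ≤ (∫⁻ s, A s) ^ (1/2 : ℝ) * (∫⁻ s, B s) ^ (1/2 : ℝ) := hHolder
          _ = _ := by rw [hAint, hBint, hfnorm, hfynorm]
      exact fun htop => (ENNReal.mul_ne_top hfin1 hfin3) (top_le_iff.1 (htop ▸ this))
    -- choose s with G s small
    have hhalf : ((ε : ENNReal) / 2) ≠ 0 := by
      simp [ENNReal.div_eq_top, hε.ne']
    obtain ⟨s, hs⟩ : ∃ s : ℝ, G s ≤ (ε : ENNReal) / 2 := by
      by_contra hcon
      push_neg at hcon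
      apply hGfin
      rw [eq_top_iff]
      calc (⊤ : ENNReal) = ((ε : ENNReal) / 2) * volume (Set.univ : Set ℝ) := by
            rw [Real.volume_univ, ENNReal.mul_top hhalf]
        _ = ∫⁻ _ : ℝ, ((ε : ENNReal) / 2) := (lintegral_const _).symm
        _ ≤ ∫⁻ s : ℝ, G s := lintegral_mono fun s => (hcon s).le
    -- conclude
    calc (‖f (x, y)‖₊ : ENNReal) ^ 2
        ≤ 2 * ∫⁻ t : ℝ, (‖f (x, t)‖₊ : ENNReal) * ‖fy (x, t)‖₊ := h1'
      _ ≤ 2 * (((ε : ENNReal) / 2) + S) := by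
          refine mul_le_mul_right ((claim2 s).trans (add_le_add ((hTG s).trans hs) claim3)) 2
      _ = 2 * S + ε := by
          rw [mul_add, ENNReal.mul_div_cancel' (by norm_num) (by norm_num), add_comm]
  -- convert to the stated real form
  have h2Sne : (2 : ENNReal) * S ≠ ⊤ := ENNReal.mul_ne_top (by norm_num) hSfin
  have h2Storeal : ((2 : ENNReal) * S).toReal
      = 2 * ((eLpNorm fx 2 (volume : Measure (ℝ × ℝ))).toReal
          * (eLpNorm fy 2 (volume : Measure (ℝ × ℝ))).toReal
        + (eLpNorm f 2 (volume : Measure (ℝ × ℝ))).toReal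
          * (eLpNorm fxy 2 (volume : Measure (ℝ × ℝ))).toReal) := by
    rw [ENNReal.toReal_mul, hS,
      ENNReal.toReal_add (ENNReal.mul_ne_top hfin2 hfin3) (ENNReal.mul_ne_top hfin1 hfin4),
      ENNReal.toReal_mul, ENNReal.toReal_mul]
    norm_num
  constructor
  · intro p
    have hkey := ENNReal.toReal_mono h2Sne (key p)
    rw [h2Storeal] at hkey
    calc (f p) ^ 2 = (((‖f p‖₊ : ENNReal) ^ 2).toReal) := by
          rw [ENNReal.toReal_pow, ENNReal.coe_toReal, coe_nnnorm, Real.norm_eq_abs, sq_abs]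
      _ ≤ _ := hkey
  · have hb : eLpNorm f ⊤ (volume : Measure (ℝ × ℝ)) ≤ ((2 : ENNReal) * S) ^ (1/2 : ℝ) := by
      rw [eLpNorm_exponent_top]
      refine essSup_le_of_ae_le _ (Filter.Eventually.of_forall fun p => ?_)
      have h := ENNReal.rpow_le_rpow (x := (‖f p‖₊ : ENNReal) ^ (2:ℕ)) (y := 2 * S)
        ((by exact_mod_cast key p)) (z := (1/2 : ℝ)) (by norm_num)
      calc (‖f p‖₊ : ENNReal) = ((‖f p‖₊ : ENNReal) ^ (2:ℕ)) ^ (1/2 : ℝ) := by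
            rw [← ENNReal.rpow_natCast _ 2, ← ENNReal.rpow_mul]
            norm_num
        _ ≤ ((2 : ENNReal) * S) ^ (1/2 : ℝ) := h
    calc (eLpNorm f ⊤ (volume : Measure (ℝ × ℝ))) ^ 2
        ≤ (((2 : ENNReal) * S) ^ (1/2 : ℝ)) ^ 2 := pow_le_pow_left₀ zero_le hb 2
      _ = (2 : ENNReal) * S := by
          rw [← ENNReal.rpow_natCast (((2 : ENNReal) * S) ^ (1/2 : ℝ)) 2, ← ENNReal.rpow_mul]
          norm_num
      _ = ENNReal.ofReal (((2 : ENNReal) * S).toReal) := (ENNReal.ofReal_toReal h2Sne).symm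
      _ = _ := by rw [h2Storeal]
end

section
/- Let q ≥ 1 be an integer and let f : ℝ² → ℝ be a continuously differentiable function which vanishes at infinity and such that f, ∂ₓf, ∂_yf ∈ L²(ℝ²) and f ∈ L^{2q}(ℝ²). Then ‖f‖_{L^{2q}}^{2q} ≤ (q!)² ‖f‖_{L²}² ‖∂ₓf‖_{L²}^{q−1} ‖∂_yf‖_{L²}^{q−1}. -/
open MeasureTheory Filter Set
open scoped ENNReal Topology

lemma oneDim (g g' : ℝ → ℝ) (hg : ∀ t, HasDerivAt g (g' t) t)
    (hg'c : Continuous g') (hg0 : Tendsto g atBot (𝓝 0))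
    (q : ℕ) (x : ℝ) :
    (‖g x‖₊ : ℝ≥0∞) ^ (q + 1) ≤ (q + 1) * ∫⁻ t, (‖g t‖₊ : ℝ≥0∞) ^ q * ‖g' t‖₊ := by
  by_cases hI : (∫⁻ t, (‖g t‖₊ : ℝ≥0∞) ^ q * ‖g' t‖₊) = ∞
  · rw [hI, ENNReal.mul_top (by simp)]
    exact le_top
  have hgc : Continuous g := continuous_iff_continuousAt.2 fun t => (hg t).continuousAt
  set φ : ℝ → ℝ := fun t => (q + 1 : ℝ) * g t ^ q * g' t with hφdef
  have hφc : Continuous φ := by continuity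
  have hφnorm : ∀ t, (‖φ t‖₊ : ℝ≥0∞) = (q + 1) * ((‖g t‖₊ : ℝ≥0∞) ^ q * ‖g' t‖₊) := by
    intro t
    have h1 : (‖(q + 1 : ℝ)‖₊ : ℝ≥0∞) = ((q : ℝ≥0∞) + 1) := by
      rw [show (q + 1 : ℝ) = ((q + 1 : ℕ) : ℝ) by push_cast; ring]
      rw [← enorm_eq_nnnorm, Real.enorm_eq_ofReal_abs, abs_of_nonneg (by positivity), ENNReal.ofReal_natCast]
      push_cast
      ring
    simp only [hφdef, nnnorm_mul, nnnorm_pow, ENNReal.coe_mul, ENNReal.coe_pow, h1, mul_assoc]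
  have hφint : Integrable φ := by
    refine ⟨hφc.aestronglyMeasurable, ?_⟩
    show (∫⁻ t, (‖φ t‖₊ : ℝ≥0∞)) < ⊤
    have hmeas : Measurable fun t => (‖g t‖₊ : ℝ≥0∞) ^ q * ‖g' t‖₊ :=
      ((hgc.measurable.nnnorm.coe_nnreal_ennreal).pow_const q).mul
        (hg'c.measurable.nnnorm.coe_nnreal_ennreal)
    calc (∫⁻ t, (‖φ t‖₊ : ℝ≥0∞)) = ∫⁻ t, (q + 1) * ((‖g t‖₊ : ℝ≥0∞) ^ q * ‖g' t‖₊) := by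
          simp_rw [hφnorm]
      _ = (q + 1) * ∫⁻ t, (‖g t‖₊ : ℝ≥0∞) ^ q * ‖g' t‖₊ := lintegral_const_mul _ hmeas
      _ < ⊤ := ENNReal.mul_lt_top (by simp) (lt_top_iff_ne_top.2 hI)
  -- FTC
  have hderiv : ∀ t, HasDerivAt (fun s => g s ^ (q + 1)) (φ t) t := by
    intro t
    have := (hg t).pow (q + 1)
    simpa [hφdef, mul_comm, mul_assoc, Pi.pow_def] using this
  have hlim : Tendsto (fun s => g s ^ (q + 1)) atBot (𝓝 0) := by
    have := hg0.pow (q + 1)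
    simpa using this
  have hFTC : ∫ t in Iic x, φ t = g x ^ (q + 1) - 0 :=
    integral_Iic_of_hasDerivAt_of_tendsto' (fun t _ => hderiv t) hφint.integrableOn hlim
  rw [sub_zero] at hFTC
  -- bound
  have key : |g x| ^ (q + 1) ≤ ∫ t in Iic x, |φ t| := by
    calc |g x| ^ (q + 1) = |g x ^ (q + 1)| := by rw [abs_pow]
      _ = |∫ t in Iic x, φ t| := by rw [hFTC]
      _ ≤ ∫ t in Iic x, |φ t| := by
          simpa using norm_integral_le_integral_norm (μ := volume.restrict (Iic x)) φ
  have habs : Integrable (fun t => |φ t|) := hφint.abs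
  have step1 : (‖g x‖₊ : ℝ≥0∞) ^ (q + 1) = ENNReal.ofReal (|g x| ^ (q + 1)) := by
    rw [ENNReal.ofReal_pow (abs_nonneg _)]
    rw [← enorm_eq_nnnorm, Real.enorm_eq_ofReal_abs]
  calc (‖g x‖₊ : ℝ≥0∞) ^ (q + 1) = ENNReal.ofReal (|g x| ^ (q + 1)) := step1
    _ ≤ ENNReal.ofReal (∫ t in Iic x, |φ t|) := ENNReal.ofReal_le_ofReal key
    _ = ∫⁻ t in Iic x, (‖φ t‖₊ : ℝ≥0∞) := by
        rw [show (∫⁻ t in Iic x, (‖φ t‖₊ : ℝ≥0∞)) = ∫⁻ t in Iic x, ‖φ t‖ₑ from rfl, ← ofReal_integral_norm_eq_lintegral_enorm hφint.integrableOn]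
        simp [Real.norm_eq_abs]
    _ ≤ ∫⁻ t, (‖φ t‖₊ : ℝ≥0∞) := setLIntegral_le_lintegral _ _
    _ = (q + 1) * ∫⁻ t, (‖g t‖₊ : ℝ≥0∞) ^ q * ‖g' t‖₊ := by
        simp_rw [hφnorm]
        exact lintegral_const_mul _ (((hgc.measurable.nnnorm.coe_nnreal_ennreal).pow_const q).mul (hg'c.measurable.nnnorm.coe_nnreal_ennreal))

lemma sliceX (f fx : ℝ × ℝ → ℝ) (hf : ContDiff ℝ 1 f)
    (hvan : Tendsto f (cocompact (ℝ × ℝ)) (𝓝 0))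
    (hfx : ∀ p : ℝ × ℝ, fx p = fderiv ℝ f p (1, 0)) (hfxc : Continuous fx)
    (q : ℕ) (p : ℝ × ℝ) :
    (‖f p‖₊ : ℝ≥0∞) ^ (q + 1) ≤ (q + 1) * ∫⁻ t, (‖f (t, p.2)‖₊ : ℝ≥0∞) ^ q * ‖fx (t, p.2)‖₊ := by
  obtain ⟨x, y⟩ := p
  have hline : ∀ t : ℝ, HasDerivAt (fun s => f (s, y)) (fx (t, y)) t := by
    intro t
    have h1 : HasDerivAt (fun s : ℝ => ((s, y) : ℝ × ℝ)) ((1 : ℝ), (0 : ℝ)) t :=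
      (hasDerivAt_id t).prodMk (hasDerivAt_const t y)
    have h2 : HasFDerivAt f (fderiv ℝ f (t, y)) (t, y) :=
      (hf.differentiable one_ne_zero (t, y)).hasFDerivAt
    have h3 := h2.comp_hasDerivAt t h1
    rw [hfx]
    exact h3
  have hiso : Isometry (fun t : ℝ => ((t, y) : ℝ × ℝ)) :=
    Isometry.of_dist_eq (fun a b => by simp [Prod.dist_eq, dist_nonneg])
  have htend : Tendsto (fun t : ℝ => f (t, y)) atBot (𝓝 0) :=
    hvan.comp ((hiso.isClosedEmbedding.tendsto_cocompact).mono_left atBot_le_cocompact)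
  exact oneDim _ _ hline (hfxc.comp (continuous_id.prodMk continuous_const)) htend q x

lemma sliceY (f fy : ℝ × ℝ → ℝ) (hf : ContDiff ℝ 1 f)
    (hvan : Tendsto f (cocompact (ℝ × ℝ)) (𝓝 0))
    (hfy : ∀ p : ℝ × ℝ, fy p = fderiv ℝ f p (0, 1)) (hfyc : Continuous fy)
    (q : ℕ) (p : ℝ × ℝ) :
    (‖f p‖₊ : ℝ≥0∞) ^ (q + 1) ≤ (q + 1) * ∫⁻ s, (‖f (p.1, s)‖₊ : ℝ≥0∞) ^ q * ‖fy (p.1, s)‖₊ := by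
  obtain ⟨x, y⟩ := p
  have hline : ∀ s : ℝ, HasDerivAt (fun s => f (x, s)) (fy (x, s)) s := by
    intro s
    have h1 : HasDerivAt (fun s : ℝ => ((x, s) : ℝ × ℝ)) ((0 : ℝ), (1 : ℝ)) s :=
      (hasDerivAt_const s x).prodMk (hasDerivAt_id s)
    have h2 : HasFDerivAt f (fderiv ℝ f (x, s)) (x, s) :=
      (hf.differentiable one_ne_zero (x, s)).hasFDerivAt
    have h3 := h2.comp_hasDerivAt s h1
    rw [hfy]
    exact h3
  have hiso : Isometry (fun s : ℝ => ((x, s) : ℝ × ℝ)) :=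
    Isometry.of_dist_eq (fun a b => by simp [Prod.dist_eq, dist_nonneg])
  have htend : Tendsto (fun s : ℝ => f (x, s)) atBot (𝓝 0) :=
    hvan.comp ((hiso.isClosedEmbedding.tendsto_cocompact).mono_left atBot_le_cocompact)
  exact oneDim _ _ hline (hfyc.comp (continuous_const.prodMk continuous_id)) htend q y

lemma holder_step (f g : ℝ × ℝ → ℝ) (hfc : Continuous f) (hgc : Continuous g) (r : ℕ) :
    (∫⁻ p : ℝ × ℝ, (‖f p‖₊ : ℝ≥0∞) ^ r * ‖g p‖₊) ≤
      (∫⁻ p : ℝ × ℝ, (‖f p‖₊ : ℝ≥0∞) ^ (2 * r)) ^ (1 / 2 : ℝ) * eLpNorm g 2 volume := by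
  have hconj : (2 : ℝ).HolderConjugate 2 := by constructor <;> norm_num
  have hu : AEMeasurable (fun p : ℝ × ℝ => (‖f p‖₊ : ℝ≥0∞) ^ r) volume :=
    ((hfc.measurable.nnnorm.coe_nnreal_ennreal).pow_const r).aemeasurable
  have hv : AEMeasurable (fun p : ℝ × ℝ => (‖g p‖₊ : ℝ≥0∞)) volume :=
    (hgc.measurable.nnnorm.coe_nnreal_ennreal).aemeasurable
  have H := ENNReal.lintegral_mul_le_Lp_mul_Lq (volume : Measure (ℝ × ℝ)) hconj hu hv
  have e1 : ∀ x : ℝ≥0∞, (x ^ r) ^ (2 : ℝ) = x ^ (2 * r) := by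
    intro x
    rw [← ENNReal.rpow_natCast x r, ← ENNReal.rpow_mul, ← ENNReal.rpow_natCast x (2 * r)]
    congr 1
    push_cast
    ring
  have e2 : eLpNorm g 2 volume = (∫⁻ p : ℝ × ℝ, (‖g p‖₊ : ℝ≥0∞) ^ (2 : ℝ)) ^ (1 / 2 : ℝ) := by
    rw [eLpNorm_eq_lintegral_rpow_enorm_toReal two_ne_zero ENNReal.ofNat_ne_top]
    norm_num
    rfl
  calc (∫⁻ p : ℝ × ℝ, (‖f p‖₊ : ℝ≥0∞) ^ r * ‖g p‖₊)
      = ∫⁻ p : ℝ × ℝ, ((fun p => (‖f p‖₊ : ℝ≥0∞) ^ r) * fun p => (‖g p‖₊ : ℝ≥0∞)) p := rfl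
    _ ≤ (∫⁻ p : ℝ × ℝ, ((‖f p‖₊ : ℝ≥0∞) ^ r) ^ (2 : ℝ)) ^ (1 / 2 : ℝ) *
        (∫⁻ p : ℝ × ℝ, (‖g p‖₊ : ℝ≥0∞) ^ (2 : ℝ)) ^ (1 / 2 : ℝ) := H
    _ = (∫⁻ p : ℝ × ℝ, (‖f p‖₊ : ℝ≥0∞) ^ (2 * r)) ^ (1 / 2 : ℝ) * eLpNorm g 2 volume := by
        rw [e2]
        congr 1
        congr 1
        exact lintegral_congr fun p => by rw [e1]

lemma core (f fx fy : ℝ × ℝ → ℝ) (hf : ContDiff ℝ 1 f)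
    (hvan : Tendsto f (cocompact (ℝ × ℝ)) (𝓝 0))
    (hfx : ∀ p : ℝ × ℝ, fx p = fderiv ℝ f p (1, 0))
    (hfy : ∀ p : ℝ × ℝ, fy p = fderiv ℝ f p (0, 1)) (r : ℕ) :
    (∫⁻ p : ℝ × ℝ, (‖f p‖₊ : ℝ≥0∞) ^ (2 * (r + 1))) ≤
      ((r : ℝ≥0∞) + 1) ^ 2 * (∫⁻ p : ℝ × ℝ, (‖f p‖₊ : ℝ≥0∞) ^ (2 * r)) *
        eLpNorm fx 2 volume * eLpNorm fy 2 volume := by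
  have hfc : Continuous f := hf.continuous
  have hfxc : Continuous fx := by
    have h : Continuous fun p => fderiv ℝ f p (1, 0) :=
      (hf.continuous_fderiv one_ne_zero).clm_apply continuous_const
    exact (funext hfx : fx = _) ▸ h
  have hfyc : Continuous fy := by
    have h : Continuous fun p => fderiv ℝ f p (0, 1) :=
      (hf.continuous_fderiv one_ne_zero).clm_apply continuous_const
    exact (funext hfy : fy = _) ▸ h
  set Hx : ℝ × ℝ → ℝ≥0∞ := fun p => (‖f p‖₊ : ℝ≥0∞) ^ r * ‖fx p‖₊ with hHxdef
  set Hy : ℝ × ℝ → ℝ≥0∞ := fun p => (‖f p‖₊ : ℝ≥0∞) ^ r * ‖fy p‖₊ with hHydef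
  have hHx : Measurable Hx :=
    ((hfc.measurable.nnnorm.coe_nnreal_ennreal).pow_const r).mul
      (hfxc.measurable.nnnorm.coe_nnreal_ennreal)
  have hHy : Measurable Hy :=
    ((hfc.measurable.nnnorm.coe_nnreal_ennreal).pow_const r).mul
      (hfyc.measurable.nnnorm.coe_nnreal_ennreal)
  set F : ℝ → ℝ≥0∞ := fun y => ((r : ℝ≥0∞) + 1) * ∫⁻ t, Hx (t, y) with hFdef
  set G : ℝ → ℝ≥0∞ := fun x => ((r : ℝ≥0∞) + 1) * ∫⁻ s, Hy (x, s) with hGdef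
  have hmF : Measurable fun y : ℝ => ∫⁻ t, Hx (t, y) := by
    exact (hHx.comp measurable_swap).lintegral_prod_right'
  have hmG : Measurable fun x : ℝ => ∫⁻ s, Hy (x, s) := by
    exact hHy.lintegral_prod_right'
  have hF : Measurable F := measurable_const.mul hmF
  have hG : Measurable G := measurable_const.mul hmG
  have hptF : ∀ p : ℝ × ℝ, (‖f p‖₊ : ℝ≥0∞) ^ (r + 1) ≤ F p.2 := by
    intro p
    have := sliceX f fx hf hvan hfx hfxc r p
    simpa [hFdef, hHxdef] using this
  have hptG : ∀ p : ℝ × ℝ, (‖f p‖₊ : ℝ≥0∞) ^ (r + 1) ≤ G p.1 := by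
    intro p
    have := sliceY f fy hf hvan hfy hfyc r p
    simpa [hGdef, hHydef] using this
  have step1 : (∫⁻ p : ℝ × ℝ, (‖f p‖₊ : ℝ≥0∞) ^ (2 * (r + 1))) ≤ (∫⁻ x, G x) * ∫⁻ y, F y := by
    calc (∫⁻ p : ℝ × ℝ, (‖f p‖₊ : ℝ≥0∞) ^ (2 * (r + 1)))
        = ∫⁻ p : ℝ × ℝ, (‖f p‖₊ : ℝ≥0∞) ^ (r + 1) * (‖f p‖₊ : ℝ≥0∞) ^ (r + 1) := by
          apply lintegral_congr fun p => ?_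
          rw [← pow_add]
          congr 1
          ring
      _ ≤ ∫⁻ p : ℝ × ℝ, G p.1 * F p.2 :=
          lintegral_mono fun p => mul_le_mul' (hptG p) (hptF p)
      _ = (∫⁻ x, G x) * ∫⁻ y, F y := by
          rw [Measure.volume_eq_prod ℝ ℝ, lintegral_prod_mul hG.aemeasurable hF.aemeasurable]
  have hFint : (∫⁻ y, F y) = ((r : ℝ≥0∞) + 1) * ∫⁻ p : ℝ × ℝ, Hx p := by
    rw [hFdef]
    rw [lintegral_const_mul _ hmF]
    congr 1
    rw [Measure.volume_eq_prod ℝ ℝ, lintegral_prod_symm Hx (hHx.aemeasurable)]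
  have hGint : (∫⁻ x, G x) = ((r : ℝ≥0∞) + 1) * ∫⁻ p : ℝ × ℝ, Hy p := by
    rw [hGdef]
    rw [lintegral_const_mul _ hmG]
    congr 1
    rw [Measure.volume_eq_prod ℝ ℝ, lintegral_prod Hy (hHy.aemeasurable)]
  have hhx := holder_step f fx hfc hfxc r
  have hhy := holder_step f fy hfc hfyc r
  set I2r := (∫⁻ p : ℝ × ℝ, (‖f p‖₊ : ℝ≥0∞) ^ (2 * r)) with hI2r
  calc (∫⁻ p : ℝ × ℝ, (‖f p‖₊ : ℝ≥0∞) ^ (2 * (r + 1)))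
      ≤ (∫⁻ x, G x) * ∫⁻ y, F y := step1
    _ = (((r : ℝ≥0∞) + 1) * ∫⁻ p : ℝ × ℝ, Hy p) * (((r : ℝ≥0∞) + 1) * ∫⁻ p : ℝ × ℝ, Hx p) := by
        rw [hFint, hGint]
    _ ≤ (((r : ℝ≥0∞) + 1) * (I2r ^ (1 / 2 : ℝ) * eLpNorm fy 2 volume)) *
        (((r : ℝ≥0∞) + 1) * (I2r ^ (1 / 2 : ℝ) * eLpNorm fx 2 volume)) :=
        mul_le_mul' (mul_le_mul' le_rfl hhy) (mul_le_mul' le_rfl hhx)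
    _ = ((r : ℝ≥0∞) + 1) ^ 2 * (I2r ^ (1 / 2 : ℝ) * I2r ^ (1 / 2 : ℝ)) *
        eLpNorm fx 2 volume * eLpNorm fy 2 volume := by ring
    _ = ((r : ℝ≥0∞) + 1) ^ 2 * I2r * eLpNorm fx 2 volume * eLpNorm fy 2 volume := by
        rw [← ENNReal.rpow_add_of_nonneg _ _ (by norm_num) (by norm_num)]
        norm_num

/-- Ladyzhenskaya-type inequality:
`‖f‖_{L^{2q}}^{2q} ≤ (q!)² ‖f‖₂² ‖fₓ‖₂^{q-1} ‖f_y‖₂^{q-1}`. -/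
theorem L2q_interpolation_2d (q : ℕ) (hq : 1 ≤ q) (f fx fy : ℝ × ℝ → ℝ)
    (hf : ContDiff ℝ 1 f)
    (hvan : Filter.Tendsto f (Filter.cocompact (ℝ × ℝ)) (nhds 0))
    (hfx : ∀ p : ℝ × ℝ, fx p = fderiv ℝ f p (1, 0))
    (hfy : ∀ p : ℝ × ℝ, fy p = fderiv ℝ f p (0, 1))
    (h1 : MemLp f 2 (volume : Measure (ℝ × ℝ)))
    (h2 : MemLp fx 2 (volume : Measure (ℝ × ℝ)))
    (h3 : MemLp fy 2 (volume : Measure (ℝ × ℝ)))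
    (h4 : MemLp f ((2 * q : ℕ) : ℝ≥0∞) (volume : Measure (ℝ × ℝ))) :
    (eLpNorm f ((2 * q : ℕ) : ℝ≥0∞) (volume : Measure (ℝ × ℝ))).toReal ^ (2 * q)
      ≤ (q.factorial : ℝ) ^ 2 *
          (eLpNorm f 2 (volume : Measure (ℝ × ℝ))).toReal ^ 2 *
          (eLpNorm fx 2 (volume : Measure (ℝ × ℝ))).toReal ^ (q - 1) *
          (eLpNorm fy 2 (volume : Measure (ℝ × ℝ))).toReal ^ (q - 1) := by
  set μ2 : Measure (ℝ × ℝ) := volume with hμ2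
  set SA := eLpNorm fx 2 μ2 with hSA
  set SB := eLpNorm fy 2 μ2 with hSB
  set I : ℕ → ℝ≥0∞ := fun m => ∫⁻ p : ℝ × ℝ, (‖f p‖₊ : ℝ≥0∞) ^ m ∂μ2 with hI
  -- induction
  have main : ∀ r : ℕ, I (2 * (r + 1)) ≤ (((r + 1).factorial : ℝ≥0∞)) ^ 2 * I 2 * SA ^ r * SB ^ r := by
    intro r
    induction r with
    | zero => simp
    | succ n ih =>
      calc I (2 * (n + 1 + 1))
          ≤ ((n + 1 : ℝ≥0∞) + 1) ^ 2 * I (2 * (n + 1)) * SA * SB := by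
            have := core f fx fy hf hvan hfx hfy (n + 1)
            push_cast at this ⊢
            exact this
        _ ≤ ((n + 1 : ℝ≥0∞) + 1) ^ 2 * ((((n + 1).factorial : ℝ≥0∞)) ^ 2 * I 2 * SA ^ n * SB ^ n) * SA * SB := by
            gcongr
        _ = (((n + 2).factorial : ℝ≥0∞)) ^ 2 * I 2 * SA ^ (n + 1) * SB ^ (n + 1) := by
            rw [Nat.factorial_succ (n + 1)]
            push_cast
            ring
  -- finiteness facts
  have hI2eq : I 2 = (eLpNorm f 2 μ2) ^ (2 : ℝ) := by
    rw [eLpNorm_eq_lintegral_rpow_enorm_toReal two_ne_zero ENNReal.ofNat_ne_top]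
    rw [← ENNReal.rpow_mul]
    norm_num
    rfl
  obtain ⟨r, rfl⟩ : ∃ r, q = r + 1 := ⟨q - 1, (Nat.succ_pred_eq_of_pos hq).symm⟩
  have hIq : I (2 * (r + 1)) = (eLpNorm f ((2 * (r + 1) : ℕ) : ℝ≥0∞) μ2) ^ ((2 * (r + 1) : ℕ) : ℝ) := by
    rw [eLpNorm_eq_lintegral_rpow_enorm_toReal (by positivity) (ENNReal.natCast_ne_top _)]
    rw [← ENNReal.rpow_mul, ENNReal.toReal_natCast]
    rw [one_div, inv_mul_cancel₀ (by positivity), ENNReal.rpow_one]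
    rw [hI]
    exact lintegral_congr fun p => (ENNReal.rpow_natCast _ _).symm
  -- RHS finiteness
  have hSAfin : SA ≠ ∞ := h2.2.ne
  have hSBfin : SB ≠ ∞ := h3.2.ne
  have hI2fin : I 2 ≠ ∞ := by
    rw [hI2eq]
    exact (ENNReal.rpow_lt_top_of_nonneg (by norm_num) h1.2.ne).ne
  have hRfin : (((r + 1).factorial : ℝ≥0∞)) ^ 2 * I 2 * SA ^ r * SB ^ r ≠ ∞ := by
    apply ENNReal.mul_ne_top
    apply ENNReal.mul_ne_top
    apply ENNReal.mul_ne_top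
    · exact ENNReal.pow_ne_top (ENNReal.natCast_ne_top _)
    · exact hI2fin
    · exact ENNReal.pow_ne_top hSAfin
    · exact ENNReal.pow_ne_top hSBfin
  have hmr := main r
  have := ENNReal.toReal_mono hRfin hmr
  -- convert LHS
  have hLHS : (I (2 * (r + 1))).toReal
      = (eLpNorm f ((2 * (r + 1) : ℕ) : ℝ≥0∞) μ2).toReal ^ (2 * (r + 1)) := by
    rw [hIq, ← ENNReal.toReal_rpow, Real.rpow_natCast]
  have hRHS : ((((r + 1).factorial : ℝ≥0∞)) ^ 2 * I 2 * SA ^ r * SB ^ r).toReal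
      = ((r + 1).factorial : ℝ) ^ 2 * (eLpNorm f 2 μ2).toReal ^ 2 * SA.toReal ^ r * SB.toReal ^ r := by
    rw [ENNReal.toReal_mul, ENNReal.toReal_mul, ENNReal.toReal_mul, ENNReal.toReal_pow,
      ENNReal.toReal_pow, ENNReal.toReal_pow, ENNReal.toReal_natCast]
    congr 2
    rw [hI2eq, ← ENNReal.toReal_rpow]
    norm_num
  rw [hLHS, hRHS] at this
  simpa using this
end

section
/- Fix μ > 0. For every nonnegative integer l, every t > 0 and every (x,y) ∈ ℝ², the kernel U_l satisfies |U_l(x,y,t)| ≤ (Γ((1+2l)/4) / (4π^{3/2} μ^{(1+2l)/4})) t^{−3/4 − l/2}; in particular ‖∂ₓˡU(·,·,t)‖_{L^∞(ℝ²)} ≤ C t^{−3/4 − l/2} with C = Γ((1+2l)/4)/(4π^{3/2}μ^{(1+2l)/4}). -/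
open MeasureTheory Filter Complex

noncomputable section

/-- The kernel `U_l = ∂ₓˡ U`, where `U` is the fundamental solution of the linearized
equation `u_t + u_{xxx} + u_{yyx} - μ u_{xx} = 0`:
`U_l(x,y,t) = (t^{-1/2}/(4π^{3/2})) ∫ (iξ)^l |ξ|^{-1/2} e^{-μtξ²}
  exp(i(tξ³ - y²/(4tξ) + (π/4) sgn ξ + xξ)) dξ`. -/
def kernelU (μ : ℝ) (l : ℕ) (x y t : ℝ) : ℂ :=
  ((t ^ (-(1:ℝ)/2) / (4 * Real.pi ^ ((3:ℝ)/2)) : ℝ) : ℂ) *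
    ∫ ξ : ℝ, (Complex.I * (ξ : ℂ)) ^ l *
      ((|ξ| ^ (-(1:ℝ)/2) * Real.exp (-(μ * t) * ξ ^ 2) : ℝ) : ℂ) *
      Complex.exp (Complex.I *
        ((t * ξ ^ 3 - y ^ 2 / (4 * t * ξ) + (Real.pi / 4) * Real.sign ξ + x * ξ : ℝ) : ℂ))

/-- The kernel `V_l = ∂ₓˡ V`, where `V` is the fundamental solution of
`v_t + v_{yyx} - μ v_{xx} = 0`:
`V_l(x,y,t) = (t^{-1/2}/(4π^{3/2})) ∫ (iξ)^l |ξ|^{-1/2} e^{-μtξ²}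
  exp(i(- y²/(4tξ) + (π/4) sgn ξ + xξ)) dξ`. -/
def kernelV (μ : ℝ) (l : ℕ) (x y t : ℝ) : ℂ :=
  ((t ^ (-(1:ℝ)/2) / (4 * Real.pi ^ ((3:ℝ)/2)) : ℝ) : ℂ) *
    ∫ ξ : ℝ, (Complex.I * (ξ : ℂ)) ^ l *
      ((|ξ| ^ (-(1:ℝ)/2) * Real.exp (-(μ * t) * ξ ^ 2) : ℝ) : ℂ) *
      Complex.exp (Complex.I *
        ((- y ^ 2 / (4 * t * ξ) + (Real.pi / 4) * Real.sign ξ + x * ξ : ℝ) : ℂ))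

end
/-- pointwise and `L^∞` decay estimate for the kernel `U_l = ∂ₓˡU`. -/
theorem kernelU_decay (μ : ℝ) (hμ : 0 < μ) (l : ℕ) (t : ℝ) (ht : 0 < t) :
    (∀ x y : ℝ, ‖kernelU μ l x y t‖ ≤
      Real.Gamma ((1 + 2 * (l : ℝ)) / 4) /
          (4 * Real.pi ^ ((3 : ℝ)/2) * μ ^ ((1 + 2 * (l : ℝ)) / 4)) *
        t ^ (-(3 : ℝ)/4 - (l : ℝ)/2)) ∧
    eLpNorm (fun q : ℝ × ℝ => kernelU μ l q.1 q.2 t) ⊤ (volume : Measure (ℝ × ℝ))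
      ≤ ENNReal.ofReal
        (Real.Gamma ((1 + 2 * (l : ℝ)) / 4) /
            (4 * Real.pi ^ ((3 : ℝ)/2) * μ ^ ((1 + 2 * (l : ℝ)) / 4)) *
          t ^ (-(3 : ℝ)/4 - (l : ℝ)/2)) := by
  have hb : 0 < μ * t := mul_pos hμ ht
  have hq : (-1 : ℝ) < (l : ℝ) - 1/2 := by
    have : (0:ℝ) ≤ (l:ℝ) := Nat.cast_nonneg l
    linarith
  -- the key integral computation
  have hint : (∫ ξ : ℝ, |ξ| ^ ((l : ℝ) - 1/2) * Real.exp (-(μ * t) * ξ ^ 2))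
      = (μ * t) ^ (-((1 + 2 * (l : ℝ)) / 4)) * Real.Gamma ((1 + 2 * (l : ℝ)) / 4) := by
    have h2 : (∫ ξ : ℝ, |ξ| ^ ((l : ℝ) - 1/2) * Real.exp (-(μ * t) * ξ ^ 2))
        = 2 * ∫ x in Set.Ioi (0:ℝ), x ^ ((l:ℝ)-1/2) * Real.exp (-(μ*t)*x^2) := by
      rw [← integral_comp_abs (f := fun x : ℝ => x ^ ((l:ℝ)-1/2) * Real.exp (-(μ*t)*x^2))]
      congr 1; funext ξ
      rw [_root_.sq_abs]
    have h3 : (∫ x in Set.Ioi (0:ℝ), x ^ ((l:ℝ)-1/2) * Real.exp (-(μ*t)*x^2))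
        = ∫ x in Set.Ioi (0:ℝ), x ^ ((l:ℝ)-1/2) * Real.exp (-(μ*t)*x^(2:ℝ)) := by
      refine setIntegral_congr_fun measurableSet_Ioi fun x hx => ?_
      rw [Real.rpow_two]
    rw [h2, h3, integral_rpow_mul_exp_neg_mul_rpow two_pos hq hb]
    have e1 : -(((l : ℝ) - 1/2) + 1) / 2 = -((1 + 2 * (l : ℝ)) / 4) := by ring
    have e2 : (((l : ℝ) - 1/2) + 1) / 2 = (1 + 2 * (l : ℝ)) / 4 := by ring
    rw [e1, e2]; ring
  -- pointwise bound
  have hpt : ∀ x y : ℝ, ‖kernelU μ l x y t‖ ≤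
      Real.Gamma ((1 + 2 * (l : ℝ)) / 4) /
          (4 * Real.pi ^ ((3 : ℝ)/2) * μ ^ ((1 + 2 * (l : ℝ)) / 4)) *
        t ^ (-(3 : ℝ)/4 - (l : ℝ)/2) := by
    intro x y
    have hpi : (0:ℝ) < Real.pi ^ ((3:ℝ)/2) := Real.rpow_pos_of_pos Real.pi_pos _
    have hc : (0:ℝ) < t ^ (-(1:ℝ)/2) / (4 * Real.pi ^ ((3:ℝ)/2)) := by positivity
    rw [kernelU, norm_mul, Complex.norm_real, Real.norm_eq_abs, abs_of_pos hc]
    have hnormle : ‖∫ ξ : ℝ, (Complex.I * (ξ : ℂ)) ^ l *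
        ((|ξ| ^ (-(1:ℝ)/2) * Real.exp (-(μ * t) * ξ ^ 2) : ℝ) : ℂ) *
        Complex.exp (Complex.I *
          ((t * ξ ^ 3 - y ^ 2 / (4 * t * ξ) + (Real.pi / 4) * Real.sign ξ + x * ξ : ℝ) : ℂ))‖
        ≤ (μ * t) ^ (-((1 + 2 * (l : ℝ)) / 4)) * Real.Gamma ((1 + 2 * (l : ℝ)) / 4) := by
      refine le_trans (norm_integral_le_integral_norm _) ?_
      rw [← hint]
      refine le_of_eq (integral_congr_ae ?_)
      have h0 : ∀ᵐ ξ : ℝ, ξ ≠ 0 := by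
        refine (MeasureTheory.ae_iff).mpr ?_
        simp [Real.volume_singleton]
      filter_upwards [h0] with ξ hξ
      have habs : (0:ℝ) < |ξ| := abs_pos.mpr hξ
      rw [norm_mul, norm_mul, norm_pow, norm_mul, Complex.norm_I,
        one_mul, Complex.norm_real, Real.norm_eq_abs]
      have hexp1 : ‖Complex.exp (Complex.I *
          ((t * ξ ^ 3 - y ^ 2 / (4 * t * ξ) + (Real.pi / 4) * Real.sign ξ + x * ξ : ℝ) : ℂ))‖
          = 1 := by
        rw [mul_comm, Complex.norm_exp_ofReal_mul_I]
      rw [hexp1, mul_one, Complex.norm_real, Real.norm_eq_abs,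
        _root_.abs_of_nonneg (by positivity : (0:ℝ) ≤ |ξ| ^ (-(1:ℝ)/2) * Real.exp (-(μ * t) * ξ ^ 2)),
        ← Real.rpow_natCast |ξ| l, ← mul_assoc, ← Real.rpow_add habs,
        show (l:ℝ) + -(1:ℝ)/2 = (l:ℝ) - 1/2 by ring]
    calc t ^ (-(1:ℝ)/2) / (4 * Real.pi ^ ((3:ℝ)/2)) * ‖_‖
        ≤ t ^ (-(1:ℝ)/2) / (4 * Real.pi ^ ((3:ℝ)/2)) *
          ((μ * t) ^ (-((1 + 2 * (l : ℝ)) / 4)) * Real.Gamma ((1 + 2 * (l : ℝ)) / 4)) :=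
          mul_le_mul_of_nonneg_left hnormle hc.le
      _ = Real.Gamma ((1 + 2 * (l : ℝ)) / 4) /
          (4 * Real.pi ^ ((3 : ℝ)/2) * μ ^ ((1 + 2 * (l : ℝ)) / 4)) *
          t ^ (-(3 : ℝ)/4 - (l : ℝ)/2) := by
          rw [Real.mul_rpow hμ.le ht.le, Real.rpow_neg hμ.le,
            show (-(3:ℝ)/4 - (l:ℝ)/2) = (-(1:ℝ)/2) + (-((1 + 2*(l:ℝ))/4)) by ring,
            Real.rpow_add ht]
          have hμa : (0:ℝ) < μ ^ ((1 + 2 * (l : ℝ)) / 4) := Real.rpow_pos_of_pos hμ _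
          field_simp
  refine ⟨hpt, ?_⟩
  rw [eLpNorm_exponent_top]
  exact eLpNormEssSup_le_of_ae_bound (Filter.Eventually.of_forall fun q => hpt q.1 q.2)
end

section
/- Fix μ > 0. For every nonnegative integer l, every t > 0 and every (x,y) ∈ ℝ², |U_l(x,y,t) − V_l(x,y,t)| ≤ (Γ((7+2l)/4) / (4π^{3/2} μ^{(7+2l)/4})) t^{−5/4 − l/2}; in particular ‖∂ₓˡ(U(·,·,t) − V(·,·,t))‖_{L^∞(ℝ²)} ≤ C t^{−5/4 − l/2} with C = Γ((7+2l)/4)/(4π^{3/2}μ^{(7+2l)/4}). -/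
open MeasureTheory Filter Complex

section Aux

theorem measurable_realSign : Measurable Real.sign := by
  have : Real.sign = fun r : ℝ => if r < 0 then (-1:ℝ) else if 0 < r then 1 else 0 :=
    funext fun r => rfl
  rw [this]
  exact Measurable.ite measurableSet_Iio measurable_const
    (Measurable.ite measurableSet_Ioi measurable_const measurable_const)


theorem measurable_abs_rpow (c : ℝ) (hc : c ≠ 0) :
    Measurable fun ξ : ℝ => |ξ| ^ c := by
  have heq : (fun ξ : ℝ => |ξ| ^ c)
      = fun ξ : ℝ => if ξ = 0 then 0 else Real.exp (Real.log |ξ| * c) := by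
    funext ξ
    rcases eq_or_ne ξ 0 with h | h
    · rw [h, if_pos rfl, _root_.abs_zero, Real.zero_rpow hc]
    · rw [if_neg h, Real.rpow_def_of_pos (abs_pos.mpr h)]
  rw [heq]
  have hset : MeasurableSet {ξ : ℝ | ξ = 0} := by
    rw [Set.setOf_eq_eq_singleton]
    exact measurableSet_singleton 0
  exact Measurable.ite hset measurable_const
    (((measurable_id.abs.log).mul_const c).exp)

theorem norm_exp_I_mul_sub_one_le (θ : ℝ) : ‖Complex.exp (Complex.I * θ) - 1‖ ≤ |θ| := by
  have h1 : Complex.exp (Complex.I * θ) = Complex.cos θ + Complex.sin θ * Complex.I := by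
    rw [mul_comm, Complex.exp_mul_I]
  rw [h1]
  have h2 : ‖Complex.cos θ + Complex.sin θ * Complex.I - 1‖^2
      = (Real.cos θ - 1)^2 + (Real.sin θ)^2 := by
    rw [Complex.sq_norm]
    simp [Complex.normSq_apply, Complex.cos_ofReal_re, Complex.sin_ofReal_re]
    ring
  have h3 := Real.sin_sq_le_sq (x := θ/2)
  have h4 : Real.sin (θ/2)^2 = 1/2 - Real.cos (2*(θ/2)) / 2 := Real.sin_sq_eq_half_sub _
  have h5 : 2*(θ/2) = θ := by ring
  rw [h5] at h4
  have hsq : ‖Complex.cos (θ:ℂ) + Complex.sin (θ:ℂ) * Complex.I - 1‖^2 ≤ θ^2 := by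
    nlinarith [Real.sin_sq_add_cos_sq θ]
  calc ‖Complex.cos (θ:ℂ) + Complex.sin (θ:ℂ) * Complex.I - 1‖
      = Real.sqrt (‖Complex.cos (θ:ℂ) + Complex.sin (θ:ℂ) * Complex.I - 1‖^2) :=
        (Real.sqrt_sq (norm_nonneg _)).symm
    _ ≤ Real.sqrt (θ^2) := Real.sqrt_le_sqrt hsq
    _ = |θ| := Real.sqrt_sq_eq_abs θ

theorem integrable_abs_rpow_mul_exp_neg_mul_sq {b q : ℝ} (hb : 0 < b) (hq : -1 < q) :
    Integrable fun x : ℝ => |x| ^ q * Real.exp (-b * x ^ 2) := by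
  rw [← integrableOn_univ, ← @Set.Iio_union_Ici _ _ (0 : ℝ), integrableOn_union,
    integrableOn_Ici_iff_integrableOn_Ioi]
  have hIoi : IntegrableOn (fun x : ℝ => |x| ^ q * Real.exp (-b * x ^ 2)) (Set.Ioi 0) :=
    (integrableOn_rpow_mul_exp_neg_mul_sq hb hq).congr_fun
      (fun x hx => by rw [abs_of_pos hx]) measurableSet_Ioi
  refine ⟨?_, hIoi⟩
  rw [← Measure.map_neg_eq_self (volume : Measure ℝ)]
  have m : MeasurableEmbedding fun x : ℝ => -x := (Homeomorph.neg ℝ).measurableEmbedding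
  rw [m.integrableOn_map_iff]
  have hcomp : ((fun x : ℝ => |x| ^ q * Real.exp (-b * x ^ 2)) ∘ fun x : ℝ => -x)
      = fun x : ℝ => |x| ^ q * Real.exp (-b * x ^ 2) := by
    funext x; simp [Function.comp, abs_neg, neg_sq]
  rw [hcomp]
  have hpre : (fun x : ℝ => -x) ⁻¹' (Set.Iio 0) = Set.Ioi 0 := by ext x; simp
  rw [hpre]
  exact hIoi

theorem integral_abs_rpow_mul_exp_neg_mul_sq {b q : ℝ} (hb : 0 < b) (hq : -1 < q) :
    ∫ x : ℝ, |x| ^ q * Real.exp (-b * x ^ 2)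
      = b ^ (-(q+1)/2) * Real.Gamma ((q+1)/2) := by
  have h1 : (fun x : ℝ => |x| ^ q * Real.exp (-b * x ^ 2))
      = fun x : ℝ => |x| ^ q * Real.exp (-b * |x| ^ 2) := by
    funext x; rw [_root_.sq_abs]
  rw [h1, integral_comp_abs (f := fun x : ℝ => x ^ q * Real.exp (-b * x ^ 2))]
  have h2 : ∫ x in Set.Ioi (0:ℝ), x ^ q * Real.exp (-b * x ^ 2)
      = b ^ (-(q + 1) / 2) * (1 / 2) * Real.Gamma ((q + 1) / 2) := by
    have := integral_rpow_mul_exp_neg_mul_rpow (p := 2) two_pos hq hb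
    simp_rw [Real.rpow_two] at this
    exact this
  rw [h2]; ring

end Aux

section Helper

variable {μ t : ℝ} (l : ℕ)

theorem norm_kernel_integrand (hμ : 0 < μ) (ht : 0 < t) (l : ℕ) (r ξ : ℝ) :
    ‖(Complex.I * (ξ : ℂ)) ^ l *
        ((|ξ| ^ (-(1:ℝ)/2) * Real.exp (-(μ * t) * ξ ^ 2) : ℝ) : ℂ) *
        Complex.exp (Complex.I * (r : ℂ))‖
      = |ξ| ^ l * (|ξ| ^ (-(1:ℝ)/2) * Real.exp (-(μ * t) * ξ ^ 2)) := by
  rw [norm_mul, norm_mul, norm_pow]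
  simp only [norm_mul, Complex.norm_I, Complex.norm_real, Real.norm_eq_abs, one_mul,
    Complex.norm_exp]
  rw [_root_.abs_of_nonneg (Real.rpow_nonneg (abs_nonneg ξ) _),
    _root_.abs_of_nonneg (Real.exp_pos _).le]
  have : (Complex.I * (r : ℂ)).re = 0 := by simp
  rw [this, Real.exp_zero, mul_one]

theorem abs_pow_mul_rpow_eq (l : ℕ) (ξ : ℝ) :
    |ξ| ^ l * |ξ| ^ (-(1:ℝ)/2) = |ξ| ^ ((l : ℝ) - 1/2) := by
  rcases eq_or_ne ξ 0 with h | h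
  · subst h
    have h1 : (0:ℝ) ^ (-(1:ℝ)/2) = 0 := Real.zero_rpow (by norm_num)
    have h2 : (0:ℝ) ^ ((l : ℝ) - 1/2) = 0 := by
      apply Real.zero_rpow
      rcases Nat.eq_zero_or_pos l with hl | hl
      · subst hl; norm_num
      · have : (1:ℝ) ≤ l := by exact_mod_cast hl
        intro heq; nlinarith
    rw [_root_.abs_zero, h1, h2, mul_zero]
  · rw [← Real.rpow_natCast |ξ| l, ← Real.rpow_add (abs_pos.mpr h)]
    congr 1; ring

theorem abs_pow_mul_rpow_eq' (l : ℕ) (ξ : ℝ) :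
    |ξ| ^ l * |ξ| ^ (-(1:ℝ)/2) * |ξ| ^ 3 = |ξ| ^ ((l : ℝ) + 5/2) := by
  rcases eq_or_ne ξ 0 with h | h
  · subst h
    have h2 : (0:ℝ) ^ ((l : ℝ) + 5/2) = 0 := by
      apply Real.zero_rpow
      have : (0:ℝ) ≤ l := Nat.cast_nonneg l
      intro heq; nlinarith
    rw [_root_.abs_zero, h2]
    have h1 : (0:ℝ) ^ (-(1:ℝ)/2) = 0 := Real.zero_rpow (by norm_num)
    rw [h1]; ring
  · rw [← Real.rpow_natCast |ξ| l, ← Real.rpow_add (abs_pos.mpr h),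
      ← Real.rpow_natCast |ξ| 3, ← Real.rpow_add (abs_pos.mpr h)]
    congr 1; push_cast; ring

end Helper

/-- pointwise and `L^∞` estimate for the difference of the kernels
`U_l` and `V_l`. -/
theorem kernelU_sub_kernelV_decay (μ : ℝ) (hμ : 0 < μ) (l : ℕ) (t : ℝ) (ht : 0 < t) :
    (∀ x y : ℝ, ‖kernelU μ l x y t - kernelV μ l x y t‖ ≤
      Real.Gamma ((7 + 2 * (l : ℝ)) / 4) /
          (4 * Real.pi ^ ((3 : ℝ)/2) * μ ^ ((7 + 2 * (l : ℝ)) / 4)) *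
        t ^ (-(5 : ℝ)/4 - (l : ℝ)/2)) ∧
    eLpNorm (fun q : ℝ × ℝ => kernelU μ l q.1 q.2 t - kernelV μ l q.1 q.2 t) ⊤
        (volume : Measure (ℝ × ℝ))
      ≤ ENNReal.ofReal
        (Real.Gamma ((7 + 2 * (l : ℝ)) / 4) /
            (4 * Real.pi ^ ((3 : ℝ)/2) * μ ^ ((7 + 2 * (l : ℝ)) / 4)) *
          t ^ (-(5 : ℝ)/4 - (l : ℝ)/2)) := by
  have hμt : 0 < μ * t := mul_pos hμ ht
  have hπ : 0 < Real.pi ^ ((3:ℝ)/2) := Real.rpow_pos_of_pos Real.pi_pos _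
  set s : ℝ := (7 + 2 * (l : ℝ)) / 4 with hs
  set c : ℝ := t ^ (-(1:ℝ)/2) / (4 * Real.pi ^ ((3:ℝ)/2)) with hc
  have hc0 : 0 ≤ c := div_nonneg (Real.rpow_nonneg ht.le _) (by positivity)
  have key : ∀ x y : ℝ, ‖kernelU μ l x y t - kernelV μ l x y t‖ ≤
      Real.Gamma s / (4 * Real.pi ^ ((3 : ℝ)/2) * μ ^ s) * t ^ (-(5 : ℝ)/4 - (l : ℝ)/2) := by
    intro x y
    set f : ℝ → ℂ := fun ξ : ℝ => (Complex.I * (ξ : ℂ)) ^ l *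
      ((|ξ| ^ (-(1:ℝ)/2) * Real.exp (-(μ * t) * ξ ^ 2) : ℝ) : ℂ) *
      Complex.exp (Complex.I *
        ((t * ξ ^ 3 - y ^ 2 / (4 * t * ξ) + (Real.pi / 4) * Real.sign ξ + x * ξ : ℝ) : ℂ))
      with hf
    set g : ℝ → ℂ := fun ξ : ℝ => (Complex.I * (ξ : ℂ)) ^ l *
      ((|ξ| ^ (-(1:ℝ)/2) * Real.exp (-(μ * t) * ξ ^ 2) : ℝ) : ℂ) *
      Complex.exp (Complex.I *
        ((- y ^ 2 / (4 * t * ξ) + (Real.pi / 4) * Real.sign ξ + x * ξ : ℝ) : ℂ))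
      with hg
    have hU : kernelU μ l x y t = ((c:ℝ) : ℂ) * ∫ ξ : ℝ, f ξ := rfl
    have hV : kernelV μ l x y t = ((c:ℝ) : ℂ) * ∫ ξ : ℝ, g ξ := rfl
    -- measurability
    have hm1 : Measurable fun ξ : ℝ => (Complex.I * (ξ : ℂ)) ^ l :=
      (Complex.measurable_ofReal.const_mul Complex.I).pow_const l
    have hm2 : Measurable fun ξ : ℝ =>
        ((|ξ| ^ (-(1:ℝ)/2) * Real.exp (-(μ * t) * ξ ^ 2) : ℝ) : ℂ) :=
      Complex.measurable_ofReal.comp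
        ((measurable_abs_rpow (-(1:ℝ)/2) (by norm_num)).mul
          (((measurable_id.pow_const 2).const_mul (-(μ*t))).exp))
    have hmU : Measurable fun ξ : ℝ =>
        (t * ξ ^ 3 - y ^ 2 / (4 * t * ξ) + (Real.pi / 4) * Real.sign ξ + x * ξ : ℝ) := by
      apply Measurable.add
      apply Measurable.add
      apply Measurable.sub
      · exact (measurable_id.pow_const 3).const_mul t
      · exact measurable_const.div (measurable_id.const_mul (4*t))
      · exact measurable_realSign.const_mul (Real.pi / 4)
      · exact measurable_id.const_mul x
    have hmV : Measurable fun ξ : ℝ =>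
        (- y ^ 2 / (4 * t * ξ) + (Real.pi / 4) * Real.sign ξ + x * ξ : ℝ) := by
      apply Measurable.add
      apply Measurable.add
      · exact measurable_const.div (measurable_id.const_mul (4*t))
      · exact measurable_realSign.const_mul (Real.pi / 4)
      · exact measurable_id.const_mul x
    have hmf : Measurable f :=
      (hm1.mul hm2).mul
        (Complex.measurable_exp.comp ((Complex.measurable_ofReal.comp hmU).const_mul Complex.I))
    have hmg : Measurable g :=
      (hm1.mul hm2).mul
        (Complex.measurable_exp.comp ((Complex.measurable_ofReal.comp hmV).const_mul Complex.I))
    -- integrability of f and g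
    have hql : (-1 : ℝ) < (l : ℝ) - 1/2 := by
      have : (0:ℝ) ≤ l := Nat.cast_nonneg l
      linarith
    have hdom : Integrable fun ξ : ℝ => |ξ| ^ ((l:ℝ) - 1/2) * Real.exp (-(μ*t) * ξ ^ 2) :=
      integrable_abs_rpow_mul_exp_neg_mul_sq hμt hql
    have hnormf : ∀ ξ : ℝ, ‖f ξ‖ = |ξ| ^ ((l:ℝ) - 1/2) * Real.exp (-(μ*t) * ξ ^ 2) := by
      intro ξ
      rw [hf]
      rw [norm_kernel_integrand hμ ht l _ ξ, ← mul_assoc, abs_pow_mul_rpow_eq l ξ]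
    have hnormg : ∀ ξ : ℝ, ‖g ξ‖ = |ξ| ^ ((l:ℝ) - 1/2) * Real.exp (-(μ*t) * ξ ^ 2) := by
      intro ξ
      rw [hg]
      rw [norm_kernel_integrand hμ ht l _ ξ, ← mul_assoc, abs_pow_mul_rpow_eq l ξ]
    have hif : Integrable f :=
      hdom.mono' hmf.aestronglyMeasurable (ae_of_all _ fun ξ => (hnormf ξ).le)
    have hig : Integrable g :=
      hdom.mono' hmg.aestronglyMeasurable (ae_of_all _ fun ξ => (hnormg ξ).le)
    -- pointwise bound on the difference
    have hq2 : (-1 : ℝ) < (l : ℝ) + 5/2 := by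
      have : (0:ℝ) ≤ l := Nat.cast_nonneg l
      linarith
    have hbnd : ∀ ξ : ℝ, ‖f ξ - g ξ‖ ≤
        t * (|ξ| ^ ((l:ℝ) + 5/2) * Real.exp (-(μ*t) * ξ ^ 2)) := by
      intro ξ
      have hexp : Complex.exp (Complex.I *
            ((t * ξ ^ 3 - y ^ 2 / (4 * t * ξ) + (Real.pi / 4) * Real.sign ξ + x * ξ : ℝ) : ℂ))
          = Complex.exp (Complex.I * ((t * ξ ^ 3 : ℝ) : ℂ)) *
            Complex.exp (Complex.I *
              ((- y ^ 2 / (4 * t * ξ) + (Real.pi / 4) * Real.sign ξ + x * ξ : ℝ) : ℂ)) := by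
        rw [← Complex.exp_add]
        congr 1
        push_cast
        ring
      have hdiff : f ξ - g ξ =
          ((Complex.I * (ξ : ℂ)) ^ l *
            ((|ξ| ^ (-(1:ℝ)/2) * Real.exp (-(μ * t) * ξ ^ 2) : ℝ) : ℂ) *
            Complex.exp (Complex.I *
              ((- y ^ 2 / (4 * t * ξ) + (Real.pi / 4) * Real.sign ξ + x * ξ : ℝ) : ℂ))) *
          (Complex.exp (Complex.I * ((t * ξ ^ 3 : ℝ) : ℂ)) - 1) := by
        rw [hf, hg]
        simp only
        rw [hexp]
        ring
      rw [hdiff, norm_mul, norm_kernel_integrand hμ ht l _ ξ]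
      have h1 : ‖Complex.exp (Complex.I * ((t * ξ ^ 3 : ℝ) : ℂ)) - 1‖ ≤ |t * ξ ^ 3| :=
        norm_exp_I_mul_sub_one_le (t * ξ ^ 3)
      have h2 : |t * ξ ^ 3| = t * |ξ| ^ 3 := by
        rw [_root_.abs_mul, _root_.abs_of_pos ht, _root_.abs_pow]
      calc |ξ| ^ l * (|ξ| ^ (-(1:ℝ)/2) * Real.exp (-(μ*t) * ξ ^ 2)) *
            ‖Complex.exp (Complex.I * ((t * ξ ^ 3 : ℝ) : ℂ)) - 1‖
          ≤ |ξ| ^ l * (|ξ| ^ (-(1:ℝ)/2) * Real.exp (-(μ*t) * ξ ^ 2)) * (t * |ξ| ^ 3) := by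
            apply mul_le_mul_of_nonneg_left (h2 ▸ h1)
            positivity
        _ = t * (|ξ| ^ ((l:ℝ) + 5/2) * Real.exp (-(μ*t) * ξ ^ 2)) := by
            rw [← abs_pow_mul_rpow_eq' l ξ]
            ring
    -- the dominating integral
    have hbint : Integrable fun ξ : ℝ =>
        t * (|ξ| ^ ((l:ℝ) + 5/2) * Real.exp (-(μ*t) * ξ ^ 2)) :=
      (integrable_abs_rpow_mul_exp_neg_mul_sq hμt hq2).const_mul t
    have hbval : ∫ ξ : ℝ, t * (|ξ| ^ ((l:ℝ) + 5/2) * Real.exp (-(μ*t) * ξ ^ 2))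
        = t * ((μ*t) ^ (-s) * Real.Gamma s) := by
      rw [integral_const_mul, integral_abs_rpow_mul_exp_neg_mul_sq hμt hq2]
      have h1 : (((l:ℝ) + 5/2) + 1) / 2 = s := by rw [hs]; ring
      have h2 : -(((l:ℝ) + 5/2) + 1) / 2 = -s := by rw [hs]; ring
      rw [h1, h2]
    -- putting it together
    rw [hU, hV, ← mul_sub, ← integral_sub hif hig, norm_mul, Complex.norm_real,
      Real.norm_eq_abs, _root_.abs_of_nonneg hc0]
    have hle : ‖∫ ξ : ℝ, (f ξ - g ξ)‖ ≤ t * ((μ*t) ^ (-s) * Real.Gamma s) := by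
      rw [← hbval]
      exact norm_integral_le_of_norm_le hbint (ae_of_all _ hbnd)
    calc c * ‖∫ ξ : ℝ, (f ξ - g ξ)‖ ≤ c * (t * ((μ*t) ^ (-s) * Real.Gamma s)) :=
          mul_le_mul_of_nonneg_left hle hc0
      _ = Real.Gamma s / (4 * Real.pi ^ ((3 : ℝ)/2) * μ ^ s) * t ^ (-(5 : ℝ)/4 - (l : ℝ)/2) := by
          rw [hc, Real.mul_rpow hμ.le ht.le, Real.rpow_neg hμ.le]
          have hts : t ^ (-(1:ℝ)/2) * (t * t ^ (-s)) = t ^ (-(5:ℝ)/4 - (l:ℝ)/2) := by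
            rw [show t * t ^ (-s) = t ^ (1:ℝ) * t ^ (-s) by rw [Real.rpow_one],
              ← Real.rpow_add ht, ← Real.rpow_add ht]
            congr 1
            rw [hs]; ring
          have hμs : (0:ℝ) < μ ^ s := Real.rpow_pos_of_pos hμ s
          rw [← hts]
          field_simp
  refine ⟨key, ?_⟩
  rw [eLpNorm_exponent_top]
  exact eLpNormEssSup_le_of_ae_bound (ae_of_all _ fun q => key q.1 q.2)
end

section
/- Fix μ > 0. Let j be a nonnegative integer and suppose ∂_y^j u₀ ∈ L¹(ℝ²). Define M_j(w) := ∫_ℝ ∂_y^j u₀(x,w) dx and, for t > 0, 𝒱_{j,l}(x,y,t) := ∫_ℝ V_l(x, y−w, t) M_j(w) dw. Then for every nonnegative integer l, lim_{t→∞} t^{3/4 + l/2} ‖ (V_l(·,·,t) * ∂_y^j u₀) − 𝒱_{j,l}(·,·,t) ‖_{L^∞(ℝ²)} = 0, where * denotes convolution in (x,y). -/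
open MeasureTheory Filter Complex

noncomputable section KernelVAux

open Set

namespace KernelVAux

/-- The integrand occurring in `kernelV`. -/
def Fint (μ : ℝ) (l : ℕ) (x y t ξ : ℝ) : ℂ :=
  (Complex.I * (ξ : ℂ)) ^ l *
      ((|ξ| ^ (-(1:ℝ)/2) * Real.exp (-(μ * t) * ξ ^ 2) : ℝ) : ℂ) *
      Complex.exp (Complex.I *
        ((- y ^ 2 / (4 * t * ξ) + (Real.pi / 4) * Real.sign ξ + x * ξ : ℝ) : ℂ))

lemma kernelV_eq (μ : ℝ) (l : ℕ) (x y t : ℝ) :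
    kernelV μ l x y t
      = ((t ^ (-(1:ℝ)/2) / (4 * Real.pi ^ ((3:ℝ)/2)) : ℝ) : ℂ) *
        ∫ ξ : ℝ, Fint μ l x y t ξ := rfl

lemma cast_sub_half_ne (l : ℕ) : ((l : ℝ) - 1/2) ≠ 0 := by
  have h2 : (2:ℝ) * l ≠ 1 := by exact_mod_cast (by omega : 2 * l ≠ 1)
  intro h; apply h2; linarith

/-- Integrability of `|x|^s e^{-bx²}`. -/
lemma integrable_abs_rpow_mul_exp_neg_mul_sq {b s : ℝ} (hb : 0 < b) (hs : -1 < s) :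
    Integrable fun x : ℝ => |x| ^ s * Real.exp (-b * x ^ 2) := by
  have h : IntegrableOn (fun x : ℝ => |x| ^ s * Real.exp (-b * x ^ 2)) (Ioi 0) :=
    (integrableOn_rpow_mul_exp_neg_mul_sq hb hs).congr_fun
      (fun x hx => by rw [abs_of_pos hx]) measurableSet_Ioi
  have hIic : IntegrableOn (fun x : ℝ => |x| ^ s * Real.exp (-b * x ^ 2)) (Iic 0) := by
    rw [← Measure.map_neg_eq_self (volume : Measure ℝ)]
    have m : MeasurableEmbedding fun x : ℝ => -x := (Homeomorph.neg ℝ).measurableEmbedding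
    rw [m.integrableOn_map_iff]
    simp only [Function.comp_def, abs_neg, neg_sq, neg_preimage, neg_Iic, neg_zero]
    exact Iff.mpr integrableOn_Ici_iff_integrableOn_Ioi h
  rw [← integrableOn_univ, ← Iic_union_Ioi (a := (0:ℝ))]
  exact hIic.union h

/-- Scaling of Gaussian moments. -/
lemma gauss_scale {b s t : ℝ} (ht : 0 < t) :
    (∫ ξ : ℝ, |ξ| ^ s * Real.exp (-(b * t) * ξ ^ 2))
      = t ^ (-(s+1)/2) * ∫ u : ℝ, |u| ^ s * Real.exp (-b * u ^ 2) := by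
  have hst : (0:ℝ) < Real.sqrt t := Real.sqrt_pos.2 ht
  have key := MeasureTheory.Measure.integral_comp_mul_left
    (fun u : ℝ => |u| ^ s * Real.exp (-b * u ^ 2)) (Real.sqrt t)
  have h1 : ∀ x : ℝ, |Real.sqrt t * x| ^ s * Real.exp (-b * (Real.sqrt t * x) ^ 2)
      = Real.sqrt t ^ s * (|x| ^ s * Real.exp (-(b * t) * x ^ 2)) := by
    intro x
    rw [abs_mul, abs_of_pos hst, Real.mul_rpow hst.le (abs_nonneg x), mul_pow,
      Real.sq_sqrt ht.le]
    ring_nf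
  simp only [h1] at key
  rw [integral_const_mul, abs_of_pos (inv_pos.2 hst), smul_eq_mul] at key
  have hpow : Real.sqrt t ^ s ≠ 0 := (Real.rpow_pos_of_pos hst s).ne'
  have hA : (∫ ξ : ℝ, |ξ| ^ s * Real.exp (-(b * t) * ξ ^ 2))
      = (Real.sqrt t ^ s)⁻¹ * ((Real.sqrt t)⁻¹ * ∫ u : ℝ, |u| ^ s * Real.exp (-b * u ^ 2)) := by
    field_simp at key ⊢
    linarith [key]
  rw [hA]
  have e1 : (Real.sqrt t ^ s)⁻¹ * (Real.sqrt t)⁻¹ = t ^ (-(s+1)/2) := by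
    rw [Real.sqrt_eq_rpow, ← Real.rpow_mul ht.le, ← Real.rpow_neg ht.le, ← Real.rpow_neg ht.le,
      ← Real.rpow_add ht]
    congr 1
    ring
  rw [← mul_assoc, e1]

/-- Norm of the generic integrand. -/
lemma norm_aux (l : ℕ) (b ξ r : ℝ) :
    ‖(Complex.I * (ξ : ℂ)) ^ l * ((|ξ| ^ (-(1:ℝ)/2) * Real.exp (-b * ξ ^ 2) : ℝ) : ℂ) *
      Complex.exp (Complex.I * (r : ℂ))‖
      = |ξ| ^ ((l : ℝ) - 1/2) * Real.exp (-b * ξ ^ 2) := by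
  have hexp : ‖Complex.exp (Complex.I * (r : ℂ))‖ = 1 := by
    exact Complex.norm_exp_I_mul_ofReal r
  rw [norm_mul, norm_mul, hexp, mul_one, norm_pow, norm_mul,
    Complex.norm_I, one_mul, Complex.norm_real, Real.norm_eq_abs, Complex.norm_real,
    Real.norm_eq_abs]
  rw [_root_.abs_of_nonneg (mul_nonneg (Real.rpow_nonneg (abs_nonneg ξ) _) (Real.exp_pos _).le)]
  by_cases hξ : ξ = 0
  · subst hξ
    have hne : ((l : ℝ) - 1/2) ≠ 0 := cast_sub_half_ne l
    rcases Nat.eq_zero_or_pos l with hl | hl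
    · subst hl
      simp [Real.zero_rpow (by norm_num : -(1:ℝ)/2 ≠ 0), Real.zero_rpow hne]
    · simp only [abs_zero, zero_pow hl.ne', Real.zero_rpow hne, zero_mul]
  · have hpos : 0 < |ξ| := abs_pos.2 hξ
    rw [← Real.rpow_natCast |ξ| l, ← mul_assoc, ← Real.rpow_add hpos]
    congr 2
    ring

lemma norm_Fint (μ : ℝ) (l : ℕ) (x y t ξ : ℝ) :
    ‖Fint μ l x y t ξ‖ = |ξ| ^ ((l : ℝ) - 1/2) * Real.exp (-(μ * t) * ξ ^ 2) :=
  norm_aux l (μ * t) ξ _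

lemma norm_exp_I_sub (a b : ℝ) :
    ‖Complex.exp (Complex.I * a) - Complex.exp (Complex.I * b)‖ ≤ |a - b| := by
  rw [mul_comm Complex.I (a:ℂ), mul_comm Complex.I (b:ℂ), Complex.exp_mul_I, Complex.exp_mul_I]
  have h1 : (Complex.cos a + Complex.sin a * Complex.I)
        - (Complex.cos b + Complex.sin b * Complex.I)
      = ((Real.cos a - Real.cos b : ℝ) : ℂ) + ((Real.sin a - Real.sin b : ℝ) : ℂ) * Complex.I := by
    push_cast [← Complex.ofReal_cos, ← Complex.ofReal_sin]
    ring
  rw [h1, Complex.norm_def, Complex.normSq_add_mul_I, ← Real.sqrt_sq_eq_abs]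
  apply Real.sqrt_le_sqrt
  have h2 := Real.sin_sq_eq_half_sub ((a-b)/2)
  rw [(by ring : (2:ℝ)*((a-b)/2) = a-b)] at h2
  nlinarith [Real.sin_sq_le_sq (x := (a-b)/2), h2, Real.cos_sub a b,
    Real.sin_sq_add_cos_sq a, Real.sin_sq_add_cos_sq b]

lemma rpow_shift (l : ℕ) (ξ : ℝ) :
    |ξ| ^ ((l : ℝ) - 1/2) * |ξ| = |ξ| ^ ((l : ℝ) + 1/2) := by
  by_cases hξ : ξ = 0
  · subst hξ
    have h1 : ((l:ℝ) + 1/2) ≠ 0 := by positivity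
    simp only [abs_zero, Real.zero_rpow (cast_sub_half_ne l), Real.zero_rpow h1, zero_mul,
      mul_zero]
  · have hpos : 0 < |ξ| := abs_pos.2 hξ
    rw [show (l:ℝ) + 1/2 = ((l:ℝ) - 1/2) + 1 by ring, Real.rpow_add_one hpos.ne']

lemma norm_Fint_sub (μ : ℝ) (l : ℕ) (x' x y t ξ : ℝ) :
    ‖Fint μ l x' y t ξ - Fint μ l x y t ξ‖
      ≤ |x' - x| * (|ξ| ^ ((l : ℝ) + 1/2) * Real.exp (-(μ * t) * ξ ^ 2)) := by
  set A : ℂ := (Complex.I * (ξ : ℂ)) ^ l *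
      ((|ξ| ^ (-(1:ℝ)/2) * Real.exp (-(μ * t) * ξ ^ 2) : ℝ) : ℂ) with hA
  set r1 : ℝ := - y ^ 2 / (4 * t * ξ) + (Real.pi / 4) * Real.sign ξ + x' * ξ with hr1
  set r2 : ℝ := - y ^ 2 / (4 * t * ξ) + (Real.pi / 4) * Real.sign ξ + x * ξ with hr2
  have hfactor : Fint μ l x' y t ξ - Fint μ l x y t ξ
      = A * (Complex.exp (Complex.I * (r1:ℂ)) - Complex.exp (Complex.I * (r2:ℂ))) := by
    rw [mul_sub]; rfl
  have hnormA : ‖A‖ = |ξ| ^ ((l : ℝ) - 1/2) * Real.exp (-(μ * t) * ξ ^ 2) := by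
    have h0 : Complex.exp (Complex.I * ((0:ℝ):ℂ)) = 1 := by simp
    calc ‖A‖ = ‖A * Complex.exp (Complex.I * ((0:ℝ):ℂ))‖ := by rw [h0, mul_one]
      _ = _ := by rw [hA]; exact norm_aux l (μ * t) ξ 0
  rw [hfactor, norm_mul, hnormA]
  have hr : |r1 - r2| = |x' - x| * |ξ| := by
    rw [hr1, hr2, show r1 - r2 = (x' - x) * ξ by rw [hr1, hr2]; ring, abs_mul]
  calc |ξ| ^ ((l : ℝ) - 1/2) * Real.exp (-(μ * t) * ξ ^ 2) *
        ‖Complex.exp (Complex.I * (r1:ℂ)) - Complex.exp (Complex.I * (r2:ℂ))‖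
      ≤ |ξ| ^ ((l : ℝ) - 1/2) * Real.exp (-(μ * t) * ξ ^ 2) * (|x' - x| * |ξ|) := by
        apply mul_le_mul_of_nonneg_left
        · rw [← hr]; exact norm_exp_I_sub r1 r2
        · positivity
    _ = |x' - x| * (|ξ| ^ ((l : ℝ) + 1/2) * Real.exp (-(μ * t) * ξ ^ 2)) := by
        rw [← rpow_shift l ξ]; ring

lemma measurable_realSign : Measurable Real.sign := by
  unfold Real.sign
  refine Measurable.ite ?_ measurable_const (Measurable.ite ?_ measurable_const measurable_const)
  · exact measurableSet_Iio (a := (0:ℝ))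
  · exact measurableSet_Ioi (a := (0:ℝ))

lemma measurable_abs_rpow {c : ℝ} (hc : c ≠ 0) : Measurable fun ξ : ℝ => |ξ| ^ c := by
  have he : (fun ξ : ℝ => |ξ| ^ c)
      = fun ξ => if ξ = 0 then (0:ℝ) else Real.exp (Real.log |ξ| * c) := by
    ext ξ
    by_cases h : ξ = 0
    · simp [h, Real.zero_rpow hc]
    · rw [if_neg h, Real.rpow_def_of_pos (abs_pos.2 h)]
  rw [he]
  exact Measurable.ite (measurableSet_eq)
    measurable_const
    (Real.measurable_exp.comp ((Real.measurable_log.comp _root_.continuous_abs.measurable).mul_const c))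

lemma measurable_Fint (μ : ℝ) (l : ℕ) (x y t : ℝ) :
    Measurable (Fint μ l x y t) := by
  have m1 : Measurable fun ξ : ℝ => (Complex.I * (ξ : ℂ)) ^ l :=
    (Complex.measurable_ofReal.const_mul Complex.I).pow_const l
  have m2 : Measurable fun ξ : ℝ =>
      ((|ξ| ^ (-(1:ℝ)/2) * Real.exp (-(μ * t) * ξ ^ 2) : ℝ) : ℂ) :=
    Complex.measurable_ofReal.comp
      ((measurable_abs_rpow (by norm_num)).mul
        (Real.measurable_exp.comp ((measurable_id.pow_const 2).const_mul (-(μ * t)))))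
  have mphase : Measurable fun ξ : ℝ =>
      (- y ^ 2 / (4 * t * ξ) + (Real.pi / 4) * Real.sign ξ + x * ξ : ℝ) := by
    apply Measurable.add
    apply Measurable.add
    · exact measurable_const.div (measurable_id.const_mul (4 * t))
    · exact measurable_realSign.const_mul _
    · exact measurable_id.const_mul x
  have m3 : Measurable fun ξ : ℝ => Complex.exp (Complex.I *
      ((- y ^ 2 / (4 * t * ξ) + (Real.pi / 4) * Real.sign ξ + x * ξ : ℝ) : ℂ)) :=
    Complex.continuous_exp.measurable.comp
      ((Complex.measurable_ofReal.comp mphase).const_mul Complex.I)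
  exact (m1.mul m2).mul m3


/-- Gaussian moment. -/
def Gmom (b s : ℝ) : ℝ := ∫ u : ℝ, |u| ^ s * Real.exp (-b * u ^ 2)

lemma Gmom_nonneg (b s : ℝ) : 0 ≤ Gmom b s :=
  integral_nonneg fun u => by positivity

lemma cast_lt_sub_half (l : ℕ) : (-1:ℝ) < (l:ℝ) - 1/2 := by
  have : (0:ℝ) ≤ (l:ℝ) := Nat.cast_nonneg l
  linarith

lemma cast_lt_add_half (l : ℕ) : (-1:ℝ) < (l:ℝ) + 1/2 := by
  have : (0:ℝ) ≤ (l:ℝ) := Nat.cast_nonneg l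
  linarith

lemma integrable_Fint {μ t : ℝ} (hμt : 0 < μ * t) (l : ℕ) (x y : ℝ) :
    Integrable (Fint μ l x y t) := by
  apply Integrable.mono' (integrable_abs_rpow_mul_exp_neg_mul_sq hμt (cast_lt_sub_half l))
    (measurable_Fint μ l x y t).aestronglyMeasurable
  exact Filter.Eventually.of_forall fun ξ => le_of_eq (norm_Fint μ l x y t ξ)

lemma kernelV_norm_le {μ t : ℝ} (hμ : 0 < μ) (ht : 0 < t) (l : ℕ) (x y : ℝ) :
    ‖kernelV μ l x y t‖
      ≤ Gmom μ ((l:ℝ) - 1/2) / (4 * Real.pi ^ ((3:ℝ)/2)) * t ^ (-(3:ℝ)/4 - (l:ℝ)/2) := by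
  have hμt : 0 < μ * t := mul_pos hμ ht
  have h1 : ‖∫ ξ : ℝ, Fint μ l x y t ξ‖
      ≤ ∫ ξ : ℝ, |ξ| ^ ((l:ℝ) - 1/2) * Real.exp (-(μ * t) * ξ ^ 2) := by
    calc ‖∫ ξ : ℝ, Fint μ l x y t ξ‖ ≤ ∫ ξ : ℝ, ‖Fint μ l x y t ξ‖ :=
          norm_integral_le_integral_norm _
      _ = _ := by simp only [norm_Fint]
  have h2 : (∫ ξ : ℝ, |ξ| ^ ((l:ℝ) - 1/2) * Real.exp (-(μ * t) * ξ ^ 2))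
      = t ^ (-(((l:ℝ) - 1/2) + 1)/2) * Gmom μ ((l:ℝ) - 1/2) := gauss_scale ht
  have hρ : (0:ℝ) ≤ t ^ (-(1:ℝ)/2) / (4 * Real.pi ^ ((3:ℝ)/2)) :=
    div_nonneg (Real.rpow_nonneg ht.le _) (by positivity)
  rw [kernelV_eq, norm_mul, Complex.norm_real, Real.norm_eq_abs, _root_.abs_of_nonneg hρ]
  calc t ^ (-(1:ℝ)/2) / (4 * Real.pi ^ ((3:ℝ)/2)) * ‖∫ ξ : ℝ, Fint μ l x y t ξ‖
      ≤ t ^ (-(1:ℝ)/2) / (4 * Real.pi ^ ((3:ℝ)/2)) *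
        (t ^ (-(((l:ℝ) - 1/2) + 1)/2) * Gmom μ ((l:ℝ) - 1/2)) := by
        apply mul_le_mul_of_nonneg_left _ hρ
        rw [← h2]
        exact h1
    _ = Gmom μ ((l:ℝ) - 1/2) / (4 * Real.pi ^ ((3:ℝ)/2)) * t ^ (-(3:ℝ)/4 - (l:ℝ)/2) := by
        rw [show t ^ (-(1:ℝ)/2) / (4 * Real.pi ^ ((3:ℝ)/2)) *
              (t ^ (-(((l:ℝ) - 1/2) + 1)/2) * Gmom μ ((l:ℝ) - 1/2))
            = Gmom μ ((l:ℝ) - 1/2) / (4 * Real.pi ^ ((3:ℝ)/2)) *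
              (t ^ (-(1:ℝ)/2) * t ^ (-(((l:ℝ) - 1/2) + 1)/2)) by ring,
          ← Real.rpow_add ht]
        congr 2
        ring

lemma kernelV_sub_norm_le {μ t : ℝ} (hμ : 0 < μ) (ht : 0 < t) (l : ℕ) (x' x y : ℝ) :
    ‖kernelV μ l x' y t - kernelV μ l x y t‖
      ≤ Gmom μ ((l:ℝ) + 1/2) / (4 * Real.pi ^ ((3:ℝ)/2)) * |x' - x|
          * t ^ (-(5:ℝ)/4 - (l:ℝ)/2) := by
  have hμt : 0 < μ * t := mul_pos hμ ht
  have hρ : (0:ℝ) ≤ t ^ (-(1:ℝ)/2) / (4 * Real.pi ^ ((3:ℝ)/2)) :=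
    div_nonneg (Real.rpow_nonneg ht.le _) (by positivity)
  rw [kernelV_eq, kernelV_eq, ← mul_sub,
    ← integral_sub (integrable_Fint hμt l x' y) (integrable_Fint hμt l x y),
    norm_mul, Complex.norm_real, Real.norm_eq_abs, _root_.abs_of_nonneg hρ]
  have h1 : ‖∫ ξ : ℝ, (Fint μ l x' y t ξ - Fint μ l x y t ξ)‖
      ≤ ∫ ξ : ℝ, |x' - x| * (|ξ| ^ ((l:ℝ) + 1/2) * Real.exp (-(μ * t) * ξ ^ 2)) := by
    apply norm_integral_le_of_norm_le
      ((integrable_abs_rpow_mul_exp_neg_mul_sq hμt (cast_lt_add_half l)).const_mul _)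
    exact Filter.Eventually.of_forall fun ξ => norm_Fint_sub μ l x' x y t ξ
  have h2 : (∫ ξ : ℝ, |x' - x| * (|ξ| ^ ((l:ℝ) + 1/2) * Real.exp (-(μ * t) * ξ ^ 2)))
      = |x' - x| * (t ^ (-(((l:ℝ) + 1/2) + 1)/2) * Gmom μ ((l:ℝ) + 1/2)) := by
    rw [integral_const_mul, gauss_scale ht]
    rfl
  calc t ^ (-(1:ℝ)/2) / (4 * Real.pi ^ ((3:ℝ)/2)) *
        ‖∫ ξ : ℝ, (Fint μ l x' y t ξ - Fint μ l x y t ξ)‖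
      ≤ t ^ (-(1:ℝ)/2) / (4 * Real.pi ^ ((3:ℝ)/2)) *
        (|x' - x| * (t ^ (-(((l:ℝ) + 1/2) + 1)/2) * Gmom μ ((l:ℝ) + 1/2))) := by
        apply mul_le_mul_of_nonneg_left _ hρ
        rw [← h2]
        exact h1
    _ = Gmom μ ((l:ℝ) + 1/2) / (4 * Real.pi ^ ((3:ℝ)/2)) * |x' - x|
          * t ^ (-(5:ℝ)/4 - (l:ℝ)/2) := by
        rw [show t ^ (-(1:ℝ)/2) / (4 * Real.pi ^ ((3:ℝ)/2)) *
              (|x' - x| * (t ^ (-(((l:ℝ) + 1/2) + 1)/2) * Gmom μ ((l:ℝ) + 1/2)))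
            = Gmom μ ((l:ℝ) + 1/2) / (4 * Real.pi ^ ((3:ℝ)/2)) * |x' - x| *
              (t ^ (-(1:ℝ)/2) * t ^ (-(((l:ℝ) + 1/2) + 1)/2)) by ring,
          ← Real.rpow_add ht]
        congr 2
        ring

lemma continuous_kernelV {μ t : ℝ} (hμ : 0 < μ) (ht : 0 < t) (l : ℕ) :
    Continuous fun q : ℝ × ℝ => kernelV μ l q.1 q.2 t := by
  have hμt : 0 < μ * t := mul_pos hμ ht
  have : (fun q : ℝ × ℝ => kernelV μ l q.1 q.2 t)
      = fun q : ℝ × ℝ => ((t ^ (-(1:ℝ)/2) / (4 * Real.pi ^ ((3:ℝ)/2)) : ℝ) : ℂ) *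
          ∫ ξ : ℝ, Fint μ l q.1 q.2 t ξ := by
    ext q
    exact kernelV_eq μ l q.1 q.2 t
  rw [this]
  apply continuous_const.mul
  apply continuous_of_dominated
    (F := fun (q : ℝ × ℝ) (ξ : ℝ) => Fint μ l q.1 q.2 t ξ)
    (bound := fun ξ : ℝ => |ξ| ^ ((l:ℝ) - 1/2) * Real.exp (-(μ * t) * ξ ^ 2))
  · exact fun q => (measurable_Fint μ l q.1 q.2 t).aestronglyMeasurable
  · exact fun q => Filter.Eventually.of_forall fun ξ => le_of_eq (norm_Fint μ l q.1 q.2 t ξ)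
  · exact integrable_abs_rpow_mul_exp_neg_mul_sq hμt (cast_lt_sub_half l)
  · apply Filter.Eventually.of_forall
    intro ξ
    unfold Fint
    apply Continuous.mul continuous_const
    apply Complex.continuous_exp.comp
    apply Continuous.mul continuous_const
    apply Complex.continuous_ofReal.comp
    apply Continuous.add
    apply Continuous.add
    · exact ((continuous_snd.pow 2).neg).div_const _
    · exact continuous_const
    · exact continuous_fst.mul continuous_const

end KernelVAux

end KernelVAux

/-- approximation of the linear solution `V_l(t) * ∂_y^j u₀` by the
`y`-integrated profile `𝒱_{j,l}`.  Since only `g = ∂_y^j u₀ ∈ L¹(ℝ²)` enters, the statement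
is quantified over `g`; `M_j(w) = ∫ g(x,w) dx`. -/
theorem kernelV_conv_approximation (μ : ℝ) (hμ : 0 < μ) (j l : ℕ) :
    ∀ g : ℝ × ℝ → ℝ, Integrable g (volume : Measure (ℝ × ℝ)) →
      Filter.Tendsto
        (fun t : ℝ => ENNReal.ofReal (t ^ ((3 : ℝ)/4 + (l : ℝ)/2)) *
          eLpNorm (fun q : ℝ × ℝ =>
              (∫ p : ℝ × ℝ, kernelV μ l (q.1 - p.1) (q.2 - p.2) t * ((g p : ℝ) : ℂ)) -
                ∫ w : ℝ, kernelV μ l q.1 (q.2 - w) t * ((∫ x : ℝ, g (x, w) : ℝ) : ℂ)) ⊤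
            (volume : Measure (ℝ × ℝ)))
        Filter.atTop (nhds 0) := by
  intro g hg
  set K : ℝ := KernelVAux.Gmom μ ((l:ℝ) - 1/2) / (4 * Real.pi ^ ((3:ℝ)/2)) with hKdef
  set K' : ℝ := KernelVAux.Gmom μ ((l:ℝ) + 1/2) / (4 * Real.pi ^ ((3:ℝ)/2)) with hK'def
  have hK : 0 ≤ K := div_nonneg (KernelVAux.Gmom_nonneg _ _) (by positivity)
  have hK' : 0 ≤ K' := div_nonneg (KernelVAux.Gmom_nonneg _ _) (by positivity)
  set B : ℝ → ℝ := fun t =>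
    ∫ p : ℝ × ℝ, min (2*K) (K' * |p.1| * t ^ (-(1:ℝ)/2)) * |g p| with hBdef
  -- Pointwise bound for `t > 0`.
  have key : ∀ t : ℝ, 0 < t → ∀ q : ℝ × ℝ,
      ‖(∫ p : ℝ × ℝ, kernelV μ l (q.1 - p.1) (q.2 - p.2) t * ((g p : ℝ) : ℂ)) -
          ∫ w : ℝ, kernelV μ l q.1 (q.2 - w) t * ((∫ x : ℝ, g (x, w) : ℝ) : ℂ)‖
        ≤ t ^ (-(3:ℝ)/4 - (l:ℝ)/2) * B t := by
    intro t ht q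
    have h₁ : Integrable (fun p : ℝ × ℝ =>
        kernelV μ l (q.1 - p.1) (q.2 - p.2) t * ((g p : ℝ) : ℂ)) := by
      apply Integrable.bdd_mul (c := K * t ^ (-(3:ℝ)/4 - (l:ℝ)/2)) hg.ofReal
      · exact ((KernelVAux.continuous_kernelV hμ ht l).comp
          ((continuous_const.sub continuous_fst).prodMk
            (continuous_const.sub continuous_snd))).aestronglyMeasurable
      · exact Filter.Eventually.of_forall
          fun p => KernelVAux.kernelV_norm_le hμ ht l _ _
    have h₂ : Integrable (fun p : ℝ × ℝ =>
        kernelV μ l q.1 (q.2 - p.2) t * ((g p : ℝ) : ℂ)) := by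
      apply Integrable.bdd_mul (c := K * t ^ (-(3:ℝ)/4 - (l:ℝ)/2)) hg.ofReal
      · exact ((KernelVAux.continuous_kernelV hμ ht l).comp
          (continuous_const.prodMk (continuous_const.sub continuous_snd))).aestronglyMeasurable
      · exact Filter.Eventually.of_forall
          fun p => KernelVAux.kernelV_norm_le hμ ht l _ _
    -- Fubini for the second term.
    have h₃ : (∫ w : ℝ, kernelV μ l q.1 (q.2 - w) t * ((∫ x : ℝ, g (x, w) : ℝ) : ℂ))
        = ∫ p : ℝ × ℝ, kernelV μ l q.1 (q.2 - p.2) t * ((g p : ℝ) : ℂ) := by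
      have h2p : Integrable
          (Function.uncurry fun x w : ℝ => kernelV μ l q.1 (q.2 - w) t * ((g (x, w) : ℝ) : ℂ))
          (volume.prod volume) := by
        rw [← Measure.volume_eq_prod]
        exact h₂
      have hs : ∀ w : ℝ, kernelV μ l q.1 (q.2 - w) t * ((∫ x : ℝ, g (x, w) : ℝ) : ℂ)
          = ∫ x : ℝ, kernelV μ l q.1 (q.2 - w) t * ((g (x, w) : ℝ) : ℂ) := by
        intro w
        rw [integral_const_mul]
        congr 1
        exact integral_ofReal.symm
      calc (∫ w : ℝ, kernelV μ l q.1 (q.2 - w) t * ((∫ x : ℝ, g (x, w) : ℝ) : ℂ))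
          = ∫ w : ℝ, ∫ x : ℝ, kernelV μ l q.1 (q.2 - w) t * ((g (x, w) : ℝ) : ℂ) := by
            exact integral_congr_ae (Filter.Eventually.of_forall hs)
        _ = ∫ x : ℝ, ∫ w : ℝ, kernelV μ l q.1 (q.2 - w) t * ((g (x, w) : ℝ) : ℂ) :=
            (MeasureTheory.integral_integral_swap h2p).symm
        _ = ∫ p : ℝ × ℝ, kernelV μ l q.1 (q.2 - p.2) t * ((g (p.1, p.2) : ℝ) : ℂ)
              ∂(volume.prod volume) := MeasureTheory.integral_integral h2p
        _ = ∫ p : ℝ × ℝ, kernelV μ l q.1 (q.2 - p.2) t * ((g p : ℝ) : ℂ) := by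
            rw [← Measure.volume_eq_prod]
    rw [h₃, ← integral_sub h₁ h₂]
    have hDeq : ∀ p : ℝ × ℝ,
        kernelV μ l (q.1 - p.1) (q.2 - p.2) t * ((g p : ℝ) : ℂ) -
          kernelV μ l q.1 (q.2 - p.2) t * ((g p : ℝ) : ℂ)
        = (kernelV μ l (q.1 - p.1) (q.2 - p.2) t - kernelV μ l q.1 (q.2 - p.2) t) *
            ((g p : ℝ) : ℂ) := fun p => (sub_mul _ _ _).symm
    -- pointwise bound on the integrand
    have hb : ∀ p : ℝ × ℝ,
        ‖kernelV μ l (q.1 - p.1) (q.2 - p.2) t * ((g p : ℝ) : ℂ) -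
          kernelV μ l q.1 (q.2 - p.2) t * ((g p : ℝ) : ℂ)‖
        ≤ t ^ (-(3:ℝ)/4 - (l:ℝ)/2) *
            (min (2*K) (K' * |p.1| * t ^ (-(1:ℝ)/2)) * |g p|) := by
      intro p
      rw [hDeq p, norm_mul, Complex.norm_real, Real.norm_eq_abs,
        show t ^ (-(3:ℝ)/4 - (l:ℝ)/2) *
            (min (2*K) (K' * |p.1| * t ^ (-(1:ℝ)/2)) * |g p|)
          = (t ^ (-(3:ℝ)/4 - (l:ℝ)/2) * min (2*K) (K' * |p.1| * t ^ (-(1:ℝ)/2))) * |g p|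
          by ring]
      apply mul_le_mul_of_nonneg_right _ (abs_nonneg _)
      rw [mul_min_of_nonneg _ _ (Real.rpow_nonneg ht.le _)]
      apply le_min
      · have b1 := KernelVAux.kernelV_norm_le hμ ht l (q.1 - p.1) (q.2 - p.2)
        have b2 := KernelVAux.kernelV_norm_le hμ ht l q.1 (q.2 - p.2)
        calc ‖kernelV μ l (q.1 - p.1) (q.2 - p.2) t - kernelV μ l q.1 (q.2 - p.2) t‖
            ≤ ‖kernelV μ l (q.1 - p.1) (q.2 - p.2) t‖ + ‖kernelV μ l q.1 (q.2 - p.2) t‖ :=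
              norm_sub_le _ _
          _ ≤ K * t ^ (-(3:ℝ)/4 - (l:ℝ)/2) + K * t ^ (-(3:ℝ)/4 - (l:ℝ)/2) :=
              add_le_add b1 b2
          _ = t ^ (-(3:ℝ)/4 - (l:ℝ)/2) * (2*K) := by ring
      · have b3 := KernelVAux.kernelV_sub_norm_le hμ ht l (q.1 - p.1) q.1 (q.2 - p.2)
        rw [show q.1 - p.1 - q.1 = -p.1 by ring, abs_neg] at b3
        apply b3.trans (le_of_eq ?_)
        rw [show -(5:ℝ)/4 - (l:ℝ)/2 = (-(3:ℝ)/4 - (l:ℝ)/2) + (-(1:ℝ)/2) by ring,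
          Real.rpow_add ht]
        ring
    -- integrability of the bound
    have hmin_cont : Continuous fun p : ℝ × ℝ =>
        min (2*K) (K' * |p.1| * t ^ (-(1:ℝ)/2)) :=
      continuous_const.min
        (((continuous_const.mul (_root_.continuous_abs.comp continuous_fst)).mul
          continuous_const))
    have hmin_nonneg : ∀ p : ℝ × ℝ, 0 ≤ min (2*K) (K' * |p.1| * t ^ (-(1:ℝ)/2)) := by
      intro p
      apply le_min (by linarith)
      exact mul_nonneg (mul_nonneg hK' (abs_nonneg _)) (Real.rpow_nonneg ht.le _)
    have hmin_int : Integrable (fun p : ℝ × ℝ =>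
        min (2*K) (K' * |p.1| * t ^ (-(1:ℝ)/2)) * |g p|) := by
      apply Integrable.bdd_mul (c := 2*K) hg.abs hmin_cont.aestronglyMeasurable
      refine Filter.Eventually.of_forall fun p => ?_
      rw [Real.norm_eq_abs, _root_.abs_of_nonneg (hmin_nonneg p)]
      exact min_le_left _ _
    calc ‖∫ p : ℝ × ℝ,
            (kernelV μ l (q.1 - p.1) (q.2 - p.2) t * ((g p : ℝ) : ℂ) -
              kernelV μ l q.1 (q.2 - p.2) t * ((g p : ℝ) : ℂ))‖
        ≤ ∫ p : ℝ × ℝ, t ^ (-(3:ℝ)/4 - (l:ℝ)/2) *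
            (min (2*K) (K' * |p.1| * t ^ (-(1:ℝ)/2)) * |g p|) := by
          apply norm_integral_le_of_norm_le (hmin_int.const_mul _)
          exact Filter.Eventually.of_forall hb
      _ = t ^ (-(3:ℝ)/4 - (l:ℝ)/2) * B t := by
          rw [integral_const_mul]
  -- `B t → 0` as `t → ∞`.
  have hB0 : Filter.Tendsto B Filter.atTop (nhds 0) := by
    have := MeasureTheory.tendsto_integral_filter_of_dominated_convergence
      (μ := (volume : Measure (ℝ × ℝ))) (l := Filter.atTop)
      (F := fun (t : ℝ) (p : ℝ × ℝ) => min (2*K) (K' * |p.1| * t ^ (-(1:ℝ)/2)) * |g p|)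
      (f := fun _ : ℝ × ℝ => (0:ℝ)) (bound := fun p : ℝ × ℝ => 2*K * |g p|)
      ?_ ?_ ?_ ?_
    · simpa using this
    · apply Filter.Eventually.of_forall
      intro t
      exact (continuous_const.min
        ((continuous_const.mul (_root_.continuous_abs.comp continuous_fst)).mul
          continuous_const)).aestronglyMeasurable.mul hg.abs.1
    · filter_upwards [Filter.eventually_gt_atTop (0:ℝ)] with t ht
      apply Filter.Eventually.of_forall
      intro p
      have hmn : 0 ≤ min (2*K) (K' * |p.1| * t ^ (-(1:ℝ)/2)) :=
        le_min (by linarith)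
          (mul_nonneg (mul_nonneg hK' (abs_nonneg _)) (Real.rpow_nonneg ht.le _))
      rw [Real.norm_eq_abs, abs_mul, _root_.abs_of_nonneg hmn, _root_.abs_abs]
      exact mul_le_mul_of_nonneg_right (min_le_left _ _) (abs_nonneg _)
    · exact hg.abs.const_mul (2*K)
    · apply Filter.Eventually.of_forall
      intro p
      have h1 : Filter.Tendsto (fun t : ℝ => t ^ (-(1:ℝ)/2)) Filter.atTop (nhds 0) := by
        have := tendsto_rpow_neg_atTop (y := (1:ℝ)/2) (by norm_num)
        simpa [neg_div] using this
      have h2 : Filter.Tendsto (fun t : ℝ => K' * |p.1| * t ^ (-(1:ℝ)/2))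
          Filter.atTop (nhds 0) := by
        simpa using h1.const_mul (K' * |p.1|)
      have h3 := (tendsto_const_nhds (x := 2*K) (f := Filter.atTop)).min h2
      rw [min_eq_right (by linarith : (0:ℝ) ≤ 2*K)] at h3
      simpa using h3.mul_const (|g p|)
  -- squeeze
  apply tendsto_of_tendsto_of_tendsto_of_le_of_le'
    (tendsto_const_nhds (x := (0:ENNReal)) (f := Filter.atTop))
    (g := fun _ : ℝ => (0:ENNReal)) (h := fun t : ℝ => ENNReal.ofReal (B t))
  · have := ENNReal.tendsto_ofReal hB0
    simpa using this
  · exact Filter.Eventually.of_forall fun t => zero_le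
  · filter_upwards [Filter.eventually_gt_atTop (0:ℝ)] with t ht
    have hA := eLpNormEssSup_le_of_ae_bound (μ := (volume : Measure (ℝ × ℝ)))
      (C := t ^ (-(3:ℝ)/4 - (l:ℝ)/2) * B t) (Filter.Eventually.of_forall (key t ht))
    rw [eLpNorm_exponent_top]
    calc ENNReal.ofReal (t ^ ((3:ℝ)/4 + (l:ℝ)/2)) *
          eLpNormEssSup (fun q : ℝ × ℝ =>
            (∫ p : ℝ × ℝ, kernelV μ l (q.1 - p.1) (q.2 - p.2) t * ((g p : ℝ) : ℂ)) -
              ∫ w : ℝ, kernelV μ l q.1 (q.2 - w) t * ((∫ x : ℝ, g (x, w) : ℝ) : ℂ)) volume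
        ≤ ENNReal.ofReal (t ^ ((3:ℝ)/4 + (l:ℝ)/2)) *
            ENNReal.ofReal (t ^ (-(3:ℝ)/4 - (l:ℝ)/2) * B t) := by gcongr
      _ = ENNReal.ofReal (t ^ ((3:ℝ)/4 + (l:ℝ)/2) * (t ^ (-(3:ℝ)/4 - (l:ℝ)/2) * B t)) :=
          (ENNReal.ofReal_mul (Real.rpow_nonneg ht.le _)).symm
      _ = ENNReal.ofReal (B t) := by
          rw [← mul_assoc, ← Real.rpow_add ht,
            show (3:ℝ)/4 + (l:ℝ)/2 + (-(3:ℝ)/4 - (l:ℝ)/2) = 0 by ring,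
            Real.rpow_zero, one_mul]
end
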